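/- arXiv:2102.03492 — 2 statements merged into one kernel-verified Lean document; each statement's English description precedes it below -/
import Mathlib

section
/- Let X and Y be J-posets and let φ: Str X → Str Y be an isomorphism of posets. Let B ⊆ X₂ be finite and nonempty, and let (A,B) ∈ (Str X)_B with height_B(A,B) > 0. Writing φ(A,B) = (S,T), we have ℓ(S,T) = ℓ(A,B) and η(S,T) = η(A,B). -/
open Order Set

/-- The minimal upper bound set of `A`: the minimal elements of the set of upper bounds. -/
def mub (X : Type*) [PartialOrder X] (A : Set X) : Set X :=
  {x ∈ upperBounds A | ∀ y ∈ upperBounds A, ¬ y < x}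

/-- The set of elements of height `i` in `X`. -/
def level (X : Type*) [PartialOrder X] (i : ℕ) : Set X :=
  {x : X | Order.height x = (i : ℕ∞)}

/-- A J-poset: a countable poset with a unique minimal element satisfying (J1)-(J4). -/
structure IsJPoset (X : Type*) [PartialOrder X] : Prop where
  countable : Countable X
  uniqueMin : ∃! x : X, IsMin x
  dim2 : Order.krullDim X = 2
  mubFinite : ∀ A : Set X, A.Nonempty → (mub X A).Finite
  j2 : ∀ x ∈ level X 1, {z : X | x < z}.Infinite
  j3 : ∀ m ∈ level X 2, ∀ F : Set X, F ⊆ level X 1 → F.Finite →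
        ∃ K : Set X, K ⊆ level X 1 ∧ K.Finite ∧ Disjoint K F ∧ mub X K = {m}
  j4 : ∀ T : Set X, T ⊆ level X 2 → T.Finite → T.Nonempty →
        ∃ t ∈ level X 1, ∀ m ∈ T, t < m

/-- `(A, B)` is a member of `Str X`. -/
def StrMem (X : Type*) [PartialOrder X] (A B : Set X) : Prop :=
  A ⊆ level X 1 ∧ B ⊆ level X 2 ∧
  ((A.Finite ∧ A.Nonempty ∧ B.Finite ∧ B.Nonempty) ∨
    (∃ x, x ∈ level X 1 ∧ A = {x} ∧ B = {z ∈ level X 2 | x < z})) ∧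
  (∃ a ∈ A, ∀ b ∈ B, a < b)

/-- `(C, D)` dominates `(A, B)` via `W`. -/
def Dominates (X : Type*) [PartialOrder X] (C D A B W : Set X) : Prop :=
  A ⊂ C ∧ D ⊆ B ∧ W ⊆ C ∧ W.Nonempty ∧
  (∀ w ∈ W, ∀ d ∈ D, w < d) ∧
  (∀ a ∈ A, ∀ m : X, a < m → (∀ w ∈ W, w < m) → m ∈ D)

/-- The order on `Str X`: `(A,B) ≤ (C,D)`. -/
def StrLE (X : Type*) [PartialOrder X] (A B C D : Set X) : Prop :=
  (A = C ∧ B = D) ∨ ∃ W : Set X, Dominates X C D A B W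

/-- The strict order on `Str X`: `(A,B) < (C,D)`. -/
def StrLT (X : Type*) [PartialOrder X] (A B C D : Set X) : Prop :=
  StrLE X A B C D ∧ ¬(A = C ∧ B = D)

/-- `ℓ(A,B)`: the number of `a ∈ A` with `a < b` for all `b ∈ B`. -/
noncomputable def ell (X : Type*) [PartialOrder X] (A B : Set X) : ℕ :=
  {a ∈ A | ∀ b ∈ B, a < b}.ncard

/-- `η(A,B) = |A| - ℓ(A,B)`. -/
noncomputable def eta (X : Type*) [PartialOrder X] (A B : Set X) : ℕ :=
  A.ncard - ell X A B

/-- `Str X` as a type of pairs. -/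
abbrev Str (X : Type*) [PartialOrder X] := {p : Set X × Set X // StrMem X p.1 p.2}

def strLE {X : Type*} [PartialOrder X] (p q : Str X) : Prop :=
  StrLE X p.1.1 p.1.2 q.1.1 q.1.2

def strLT {X : Type*} [PartialOrder X] (p q : Str X) : Prop :=
  strLE p q ∧ p ≠ q

/-- Membership in `Str_F X`: members of `Str X` with both coordinates finite. -/
def StrFMem (X : Type*) [PartialOrder X] (A B : Set X) : Prop :=
  StrMem X A B ∧ A.Finite ∧ B.Finite

/-- `Str_F X` as a type of pairs. -/
abbrev StrF (X : Type*) [PartialOrder X] := {p : Set X × Set X // StrFMem X p.1 p.2}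

def strFLE {X : Type*} [PartialOrder X] (p q : StrF X) : Prop :=
  StrLE X p.1.1 p.1.2 q.1.1 q.1.2

/-- `K_{Str_F X}(z)`: all `(K, {b}) ∈ Str_F X` with `z ∈ K` and `mub K = {b}`. -/
def KSet (X : Type*) [PartialOrder X] (z : X) : Set (StrF X) :=
  {p | z ∈ p.1.1 ∧ ∃ b : X, p.1.2 = {b} ∧ mub X p.1.1 = {b}}

/-- The three-element poset `𝕀₂`: two incomparable minimal elements below one top element,
realized as the nonempty subsets of a two-element set ordered by inclusion. -/
abbrev I2 := {s : Set (Fin 2) // s.Nonempty}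

section Aux
variable {X : Type*} [PartialOrder X]

lemma IsJPoset.height_le2 (hX : IsJPoset X) (x : X) : Order.height x ≤ 2 := by
  have h := Order.height_le_krullDim x
  rw [hX.dim2] at h
  rw [show ((2 : WithBot ℕ∞)) = ((2:ℕ∞) : WithBot ℕ∞) from rfl] at h
  exact WithBot.coe_le_coe.mp h

lemma IsJPoset.height_lt_top (hX : IsJPoset X) (x : X) : Order.height x < ⊤ :=
  lt_of_le_of_lt (hX.height_le2 x) (by exact lt_top_iff_ne_top.mpr (by decide))

lemma IsJPoset.succ_le_height (hX : IsJPoset X) {x y : X} (h : x < y) :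
    Order.height x + 1 ≤ Order.height y := by
  have h2 := Order.height_strictMono h (hX.height_lt_top x)
  exact Order.add_one_le_of_lt h2

lemma mem_level_iff {x : X} {i : ℕ} : x ∈ level X i ↔ Order.height x = (i : ℕ∞) := Iff.rfl

lemma IsJPoset.lt_level2 (hX : IsJPoset X) {x z : X} (hx : x ∈ level X 1) (hz : x < z) :
    z ∈ level X 2 := by
  have h1 : Order.height x = 1 := by simpa [mem_level_iff] using hx
  have h2 := hX.succ_le_height hz
  rw [h1] at h2
  norm_num at h2
  show Order.height z = ((2:ℕ) : ℕ∞)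
  push_cast
  exact le_antisymm (hX.height_le2 z) h2

lemma level_one_ne_level_two {x : X} (h1 : x ∈ level X 1) (h2 : x ∈ level X 2) : False := by
  rw [mem_level_iff] at h1 h2
  rw [h1] at h2
  norm_num at h2

/-- If `mub K = {m}` with `m` of height 2 and `K ⊆ X₁`, then `upperBounds K = {m}`. -/
lemma IsJPoset.ub_eq_of_mub (hX : IsJPoset X) {K : Set X} {m : X}
    (hK1 : K ⊆ level X 1) (hm : m ∈ level X 2) (hmub : mub X K = {m}) :
    upperBounds K = {m} := by
  have hmm : m ∈ mub X K := by rw [hmub]; rfl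
  have hm2 : Order.height m = (2:ℕ∞) := by simpa [mem_level_iff] using hm
  -- K is nonempty
  have hKne : K.Nonempty := by
    by_contra hne
    rw [Set.not_nonempty_iff_eq_empty] at hne
    subst hne
    have hmin : IsMin m := by
      intro b hb
      rcases eq_or_lt_of_le hb with h | h
      · exact le_of_eq h.symm
      · exact absurd h (hmm.2 b (by simp [upperBounds]))
    have : Order.height m = 0 := Order.height_eq_zero.mpr hmin
    rw [this] at hm2; norm_num at hm2
  obtain ⟨k, hk⟩ := hKne
  have hk1 : Order.height k = (1:ℕ∞) := by simpa [mem_level_iff] using hK1 hk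
  apply Set.Subset.antisymm
  · intro u hu
    by_cases h1 : u ∈ mub X K
    · rw [hmub] at h1; exact h1
    have h1' : ∃ v ∈ upperBounds K, v < u := by
      by_contra hc; push_neg at hc
      exact h1 ⟨hu, hc⟩
    obtain ⟨v, hv, hvu⟩ := h1'
    exfalso
    by_cases h2 : v ∈ mub X K
    · rw [hmub] at h2
      rw [Set.mem_singleton_iff] at h2
      subst h2
      have := hX.succ_le_height hvu
      rw [hm2] at this
      have hle := hX.height_le2 u
      have h3 : (3:ℕ∞) ≤ Order.height u := by
        calc (3:ℕ∞) = 2 + 1 := by norm_num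
        _ ≤ Order.height u := this
      have h32 : (3:ℕ∞) ≤ 2 := le_trans h3 hle
      norm_num at h32
    have h2' : ∃ w ∈ upperBounds K, w < v := by
      by_contra hc; push_neg at hc
      exact h2 ⟨hv, hc⟩
    obtain ⟨w, hw, hwv⟩ := h2'
    have hkw : Order.height k ≤ Order.height w := Order.height_mono (hw hk)
    have hv2 : Order.height w + 1 ≤ Order.height v := hX.succ_le_height hwv
    have hu3 : Order.height v + 1 ≤ Order.height u := hX.succ_le_height hvu
    have hle := hX.height_le2 u
    rw [hk1] at hkw
    have : (3:ℕ∞) ≤ Order.height u := by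
      calc (3:ℕ∞) = 1 + 1 + 1 := by norm_num
      _ ≤ Order.height w + 1 + 1 := by gcongr
      _ ≤ Order.height v + 1 := by gcongr
      _ ≤ Order.height u := hu3
    have h32 : (3:ℕ∞) ≤ 2 := le_trans this hle
    norm_num at h32
  · intro y hy
    rw [Set.mem_singleton_iff] at hy
    subst hy
    exact hmm.1

/-- packaged K from (J3). -/
lemma IsJPoset.exists_K (hX : IsJPoset X) {m : X} (hm : m ∈ level X 2) {F : Set X}
    (hF1 : F ⊆ level X 1) (hFf : F.Finite) :
    ∃ K : Set X, K ⊆ level X 1 ∧ K.Finite ∧ Disjoint K F ∧ K.Nonempty ∧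
      upperBounds K = {m} ∧ ∀ k ∈ K, k < m := by
  obtain ⟨K, h1, h2, h3, h4⟩ := hX.j3 m hm F hF1 hFf
  have hub := hX.ub_eq_of_mub h1 hm h4
  have hKne : K.Nonempty := by
    by_contra hne
    rw [Set.not_nonempty_iff_eq_empty] at hne
    subst hne
    have : upperBounds (∅ : Set X) = Set.univ := by simp [upperBounds]
    rw [this] at hub
    obtain ⟨k⟩ : Nonempty X := ⟨m⟩
    have h5 : m ∈ level X 2 := hm
    -- univ = {m} means X has one element; then m is minimal, contradicting height 2
    have hmin : IsMin m := by
      intro b _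
      have : b ∈ ({m} : Set X) := by rw [← hub]; trivial
      rw [Set.mem_singleton_iff] at this; subst this; exact le_rfl
    have h0 : Order.height m = 0 := Order.height_eq_zero.mpr hmin
    have h2' : Order.height m = (2:ℕ∞) := by simpa [mem_level_iff] using hm
    rw [h0] at h2'; norm_num at h2'
  refine ⟨K, h1, h2, h3, hKne, hub, ?_⟩
  intro k hk
  have hle : k ≤ m := by
    have : m ∈ upperBounds K := by rw [hub]; rfl
    exact this hk
  rcases eq_or_lt_of_le hle with h | h
  · exfalso; exact level_one_ne_level_two (h ▸ h1 hk) hm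
  · exact h

end Aux

section StrLayer
variable {X : Type*} [PartialOrder X]

lemma StrMem.finA {A B : Set X} (h : StrMem X A B) : A.Finite := by
  rcases h.2.2.1 with ⟨hf, -, -, -⟩ | ⟨x, -, rfl, -⟩
  · exact hf
  · exact Set.finite_singleton x

lemma StrMem.neA {A B : Set X} (h : StrMem X A B) : A.Nonempty := by
  rcases h.2.2.1 with ⟨-, hne, -, -⟩ | ⟨x, -, rfl, -⟩
  · exact hne
  · exact ⟨x, rfl⟩

lemma StrMem.neB (hX : IsJPoset X) {A B : Set X} (h : StrMem X A B) : B.Nonempty := by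
  rcases h.2.2.1 with ⟨-, -, -, hne⟩ | ⟨x, hx, -, rfl⟩
  · exact hne
  · obtain ⟨z, hz⟩ := (hX.j2 x hx).nonempty
    exact ⟨z, hX.lt_level2 hx hz, hz⟩

lemma Str.ext {p q : Str X} (h1 : p.1.1 = q.1.1) (h2 : p.1.2 = q.1.2) : p = q :=
  Subtype.ext (Prod.ext h1 h2)

lemma strLE_refl (p : Str X) : strLE p p := Or.inl ⟨rfl, rfl⟩

lemma strLE_antisymm {p q : Str X} (h1 : strLE p q) (h2 : strLE q p) : p = q := by
  rcases h1 with ⟨e1, e2⟩ | ⟨W, hd⟩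
  · exact Str.ext e1 e2
  rcases h2 with ⟨e1, e2⟩ | ⟨W', hd'⟩
  · exact (Str.ext e1 e2).symm
  exact absurd (Set.Subset.antisymm hd.1.subset hd'.1.subset) hd.1.ne

/-- common upper bound relation -/
def Compat (u v : Str X) : Prop := ∃ w : Str X, strLE u w ∧ strLE v w

def SameSet (p : Str X) : Set (Str X) :=
  {q | (∀ z, Compat z q ↔ Compat z p) ∧ ∀ r, strLT p r → strLE q r}

def AtomsOf (p : Str X) : Set (Str X) :=
  {q | q ∈ SameSet p ∧ ∀ q' ∈ SameSet p, q' ∈ SameSet q → q' = q}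

def CoOf (p : Str X) : Set (Str X) :=
  {q | q ∈ SameSet p ∧ q ≠ p ∧ ∀ q' ∈ SameSet p, q' ≠ p → q ∈ SameSet q' → q' = q}

lemma IsJPoset.dom_via_K (hX : IsJPoset X) {u w : Str X} {K : Set X} {m : X}
    (hsub : u.1.1 ⊆ w.1.1) (hKw : K ⊆ w.1.1) (hKne : K.Nonempty)
    (hub : upperBounds K = {m}) (hKlt : ∀ k ∈ K, k < m)
    (hw2 : w.1.2 = {m}) (hmu : m ∈ u.1.2)
    (hproper : ∃ c ∈ w.1.1, c ∉ u.1.1) :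
    strLE u w := by
  refine Or.inr ⟨K, ?_, ?_, hKw, hKne, ?_, ?_⟩
  · exact (Set.ssubset_iff_of_subset hsub).mpr hproper
  · rw [hw2]; exact Set.singleton_subset_iff.mpr hmu
  · intro k hk d hd
    rw [hw2, Set.mem_singleton_iff] at hd; subst hd; exact hKlt k hk
  · intro a _ m' _ hall
    have hub' : m' ∈ upperBounds K := fun k' hk' => (hall k' hk').le
    rw [hub, hw2] at *
    exact hub'

lemma IsJPoset.compat_of_mem (hX : IsJPoset X) (u v : Str X) {m : X}
    (hmu : m ∈ u.1.2) (hmv : m ∈ v.1.2) : Compat u v := by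
  have hm2 : m ∈ level X 2 := u.2.2.1 hmu
  obtain ⟨K, hK1, hKf, hKd, hKne, hub, hKlt⟩ :=
    hX.exists_K hm2 (F := u.1.1 ∪ v.1.1)
      (Set.union_subset u.2.1 v.2.1) (u.2.finA.union v.2.finA)
  obtain ⟨k, hk⟩ := hKne
  have hkF := Set.disjoint_left.mp hKd hk
  have hmem : StrMem X ((u.1.1 ∪ v.1.1) ∪ K) {m} := by
    refine ⟨Set.union_subset (Set.union_subset u.2.1 v.2.1) hK1,
      by simpa using hm2,
      Or.inl ⟨(u.2.finA.union v.2.finA).union hKf, ⟨k, Set.mem_union_right _ hk⟩,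
        Set.finite_singleton m, ⟨m, rfl⟩⟩,
      ⟨k, Set.mem_union_right _ hk, ?_⟩⟩
    intro b hb; rw [Set.mem_singleton_iff] at hb; subst hb; exact hKlt k hk
  set w : Str X := ⟨((u.1.1 ∪ v.1.1) ∪ K, {m}), hmem⟩ with hw
  refine ⟨w, ?_, ?_⟩
  · exact hX.dom_via_K (Set.subset_union_left.trans Set.subset_union_left)
      Set.subset_union_right ⟨k, hk⟩ hub hKlt rfl hmu
      ⟨k, Set.mem_union_right _ hk, fun hc => hkF (Or.inl hc)⟩
  · exact hX.dom_via_K (Set.subset_union_right.trans Set.subset_union_left)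
      Set.subset_union_right ⟨k, hk⟩ hub hKlt rfl hmv
      ⟨k, Set.mem_union_right _ hk, fun hc => hkF (Or.inr hc)⟩

lemma IsJPoset.compat_iff (hX : IsJPoset X) (u v : Str X) :
    Compat u v ↔ (u.1.2 ∩ v.1.2).Nonempty := by
  constructor
  · rintro ⟨w, h1, h2⟩
    have hw : w.1.2.Nonempty := w.2.neB hX
    have s1 : w.1.2 ⊆ u.1.2 := by
      rcases h1 with ⟨-, e⟩ | ⟨W, hd⟩
      · rw [← e]
      · exact hd.2.1
    have s2 : w.1.2 ⊆ v.1.2 := by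
      rcases h2 with ⟨-, e⟩ | ⟨W, hd⟩
      · rw [← e]
      · exact hd.2.1
    exact hw.mono (Set.subset_inter s1 s2)
  · rintro ⟨m, hmu, hmv⟩
    exact hX.compat_of_mem u v hmu hmv

lemma IsJPoset.second_subset_of_sameCl (hX : IsJPoset X) {u v : Str X}
    (h : ∀ z, Compat z u → Compat z v) : u.1.2 ⊆ v.1.2 := by
  intro m hm
  have hm2 : m ∈ level X 2 := u.2.2.1 hm
  obtain ⟨K, hK1, hKf, -, hKne, hub, hKlt⟩ :=
    hX.exists_K hm2 (F := (∅ : Set X)) (by simp) (Set.finite_empty)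
  obtain ⟨k, hk⟩ := hKne
  have hmemz : StrMem X K {m} := by
    refine ⟨hK1, by simpa using hm2, Or.inl ⟨hKf, ⟨k, hk⟩, Set.finite_singleton m, ⟨m, rfl⟩⟩,
      ⟨k, hk, ?_⟩⟩
    intro b hb; rw [Set.mem_singleton_iff] at hb; subst hb; exact hKlt k hk
  set z : Str X := ⟨(K, {m}), hmemz⟩ with hz
  have hcz : Compat z u := (hX.compat_iff z u).mpr ⟨m, rfl, hm⟩
  obtain ⟨m', hm'1, hm'2⟩ := (hX.compat_iff z v).mp (h z hcz)
  have : m' = m := hm'1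
  rw [← this]; exact hm'2

lemma IsJPoset.second_eq_of_sameCl (hX : IsJPoset X) {u v : Str X}
    (h : ∀ z, Compat z u ↔ Compat z v) : u.1.2 = v.1.2 :=
  Set.Subset.antisymm (hX.second_subset_of_sameCl (fun z => (h z).mp))
    (hX.second_subset_of_sameCl (fun z => (h z).mpr))

end StrLayer

section Char
variable {X : Type*} [PartialOrder X]

/-- Main characterization of `SameSet v` for `v` with finite second coordinate. -/
lemma IsJPoset.mem_sset_iff (hX : IsJPoset X) {v : Str X} (hvB : v.1.2.Finite) (q : Str X) :
    q ∈ SameSet v ↔ q.1.2 = v.1.2 ∧ q.1.1 ⊆ v.1.1 := by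
  constructor
  · rintro ⟨hsc, hdom⟩
    have hq2 : q.1.2 = v.1.2 := hX.second_eq_of_sameCl hsc
    refine ⟨hq2, ?_⟩
    obtain ⟨m, hm⟩ := v.2.neB hX
    have hm2 : m ∈ level X 2 := v.2.2.1 hm
    obtain ⟨K, hK1, hKf, hKd, hKne, hub, hKlt⟩ :=
      hX.exists_K hm2 (F := v.1.1 ∪ q.1.1)
        (Set.union_subset v.2.1 q.2.1) (v.2.finA.union q.2.finA)
    obtain ⟨k, hk⟩ := hKne
    have hkF := Set.disjoint_left.mp hKd hk
    have hmemr : StrMem X (v.1.1 ∪ K) {m} := by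
      refine ⟨Set.union_subset v.2.1 hK1, by simpa using hm2,
        Or.inl ⟨v.2.finA.union hKf, ⟨k, Set.mem_union_right _ hk⟩,
          Set.finite_singleton m, ⟨m, rfl⟩⟩,
        ⟨k, Set.mem_union_right _ hk, ?_⟩⟩
      intro b hb; rw [Set.mem_singleton_iff] at hb; subst hb; exact hKlt k hk
    set r : Str X := ⟨(v.1.1 ∪ K, {m}), hmemr⟩ with hr
    have hvr : strLE v r :=
      hX.dom_via_K Set.subset_union_left Set.subset_union_right ⟨k, hk⟩ hub hKlt rfl hm
        ⟨k, Set.mem_union_right _ hk, fun hc => hkF (Or.inl hc)⟩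
    have hvner : v ≠ r := by
      intro e
      have : k ∈ v.1.1 := by
        have : v.1.1 = v.1.1 ∪ K := congrArg (fun t : Str X => t.1.1) e
        rw [this]; exact Set.mem_union_right _ hk
      exact hkF (Or.inl this)
    have hqr := hdom r ⟨hvr, hvner⟩
    rcases hqr with ⟨e1, -⟩ | ⟨W, hd⟩
    · exfalso
      have : k ∈ q.1.1 := by rw [e1]; exact Set.mem_union_right _ hk
      exact hkF (Or.inr this)
    · intro x hx
      rcases hd.1.subset hx with h | h
      · exact h
      · exact absurd (Or.inr hx) (Set.disjoint_left.mp hKd h)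
  · rintro ⟨hq2, hq1⟩
    constructor
    · intro z
      rw [hX.compat_iff, hX.compat_iff, hq2]
    · intro r hr
      rcases hr.1 with ⟨e1, e2⟩ | ⟨W, hd⟩
      · exact absurd (Str.ext e1 e2) hr.2
      · refine Or.inr ⟨W, ssubset_of_subset_of_ssubset hq1 hd.1, ?_,
          hd.2.2.1, hd.2.2.2.1, hd.2.2.2.2.1,
          fun a ha m' h1 h2 => hd.2.2.2.2.2 a (hq1 ha) m' h1 h2⟩
        rw [hq2]; exact hd.2.1

/-- An element strictly below `p` forces the "finite branch" for `p`. -/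
lemma finite_of_pos {p q : Str X} (h : strLT q p) :
    p.1.1.Finite ∧ p.1.1.Nonempty ∧ p.1.2.Finite ∧ p.1.2.Nonempty := by
  rcases h.1 with ⟨e1, e2⟩ | ⟨W, hd⟩
  · exact absurd (Str.ext e1 e2) h.2
  rcases p.2.2.2.1 with hfin | ⟨x, -, hA, -⟩
  · exact hfin
  · exfalso
    have h1 : q.1.1 ⊂ p.1.1 := hd.1
    rw [hA] at h1
    rw [Set.ssubset_singleton_iff] at h1
    exact (q.2.neA).ne_empty h1

/-- The "L-set" of `p`. -/
def LsetP (p : Str X) : Set X := {a ∈ p.1.1 | ∀ b ∈ p.1.2, a < b}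

lemma ell_eq_lset (p : Str X) : ell X p.1.1 p.1.2 = (LsetP p).ncard := rfl

/-- positivity forces at least two elements of the L-set. -/
lemma IsJPoset.lset_pair (hX : IsJPoset X) {p q₀ : Str X} (h : strLT q₀ p) :
    ∃ a ∈ LsetP p, ∃ a' ∈ LsetP p, a ≠ a' := by
  have hBfin : p.1.2.Finite := (finite_of_pos h).2.2.1
  rcases h.1 with ⟨e1, e2⟩ | ⟨W, hd⟩
  · exact absurd (Str.ext e1 e2) h.2
  obtain ⟨a', ha'q, ha'lt⟩ := q₀.2.2.2.2
  have ha'L : a' ∈ LsetP p := ⟨hd.1.subset ha'q, fun b hb => ha'lt b (hd.2.1 hb)⟩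
  obtain ⟨w, hw⟩ := hd.2.2.2.1
  have hwL : w ∈ LsetP p := ⟨hd.2.2.1 hw, fun b hb => hd.2.2.2.2.1 w hw b hb⟩
  by_contra hcon
  push_neg at hcon
  have hall : ∀ x ∈ LsetP p, ∀ y ∈ LsetP p, x = y := hcon
  have hsub : {z : X | a' < z} ⊆ p.1.2 := by
    intro m hm
    refine hd.2.2.2.2.2 a' ha'q m hm ?_
    intro w' hw'
    have hw'L : w' ∈ LsetP p := ⟨hd.2.2.1 hw', fun b hb => hd.2.2.2.2.1 w' hw' b hb⟩
    have : w' = a' := hall w' hw'L a' ha'L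
    rw [this]; exact hm
  have hinf : ({z : X | a' < z}).Infinite := hX.j2 a' (p.2.1 ha'L.1)
  exact (hinf.mono hsub) hBfin

end Char

section Atoms
variable {X : Type*} [PartialOrder X]

lemma IsJPoset.singleton_strMem (hX : IsJPoset X) {p : Str X} (hpB : p.1.2.Finite)
    {x : X} (hx : x ∈ LsetP p) : StrMem X {x} p.1.2 := by
  refine ⟨Set.singleton_subset_iff.mpr (p.2.1 hx.1), p.2.2.1,
    Or.inl ⟨Set.finite_singleton x, ⟨x, rfl⟩, hpB, p.2.neB hX⟩, ⟨x, rfl, hx.2⟩⟩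

lemma IsJPoset.mem_atoms_iff (hX : IsJPoset X) {p : Str X} (hpB : p.1.2.Finite) (q : Str X) :
    q ∈ AtomsOf p ↔ q.1.2 = p.1.2 ∧ ∃ x ∈ LsetP p, q.1.1 = {x} := by
  constructor
  · rintro ⟨hmem, hmin⟩
    obtain ⟨hq2, hq1⟩ := (hX.mem_sset_iff hpB q).mp hmem
    obtain ⟨x, hxq, hxlt⟩ := q.2.2.2.2
    have hxlt' : ∀ b ∈ p.1.2, x < b := by rw [← hq2]; exact hxlt
    have hxL : x ∈ LsetP p := ⟨hq1 hxq, hxlt'⟩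
    set q' : Str X := ⟨({x}, p.1.2), hX.singleton_strMem hpB hxL⟩ with hq'
    have hm1 : q' ∈ SameSet p :=
      (hX.mem_sset_iff hpB q').mpr ⟨rfl, Set.singleton_subset_iff.mpr hxL.1⟩
    have hm2 : q' ∈ SameSet q := by
      refine (hX.mem_sset_iff (v := q) (by rw [hq2]; exact hpB) q').mpr
        ⟨hq2.symm, Set.singleton_subset_iff.mpr hxq⟩
    have he := hmin q' hm1 hm2
    refine ⟨hq2, x, hxL, ?_⟩
    have := congrArg (fun t : Str X => t.1.1) he
    simpa using this.symm
  · rintro ⟨hq2, x, hxL, hq1⟩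
    have hmem : q ∈ SameSet p := by
      refine (hX.mem_sset_iff hpB q).mpr ⟨hq2, ?_⟩
      rw [hq1]; exact Set.singleton_subset_iff.mpr hxL.1
    refine ⟨hmem, ?_⟩
    intro q' hq'p hq'q
    obtain ⟨e2, e1⟩ := (hX.mem_sset_iff (v := q) (by rw [hq2]; exact hpB) q').mp hq'q
    rw [hq1] at e1
    have hne := q'.2.neA
    have : q'.1.1 = {x} := by
      rcases Set.subset_singleton_iff_eq.mp e1 with h | h
      · exact absurd h hne.ne_empty
      · exact h
    exact Str.ext (this.trans hq1.symm) e2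

lemma IsJPoset.diff_strMem (hX : IsJPoset X) {p : Str X} (hpB : p.1.2.Finite)
    (hpair : ∃ a ∈ LsetP p, ∃ a' ∈ LsetP p, a ≠ a') (x : X) :
    StrMem X (p.1.1 \ {x}) p.1.2 := by
  obtain ⟨a, ha, a', ha', hne⟩ := hpair
  have hLne : ∃ b ∈ LsetP p, b ≠ x := by
    by_cases h : a = x
    · exact ⟨a', ha', fun e => hne (h.trans e.symm)⟩
    · exact ⟨a, ha, h⟩
  obtain ⟨b, hbL, hbx⟩ := hLne
  have hbmem : b ∈ p.1.1 \ {x} := ⟨hbL.1, by simp [hbx]⟩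
  exact ⟨Set.diff_subset.trans p.2.1, p.2.2.1,
    Or.inl ⟨p.2.finA.diff, ⟨b, hbmem⟩, hpB, p.2.neB hX⟩, ⟨b, hbmem, hbL.2⟩⟩

lemma IsJPoset.mem_co_iff (hX : IsJPoset X) {p : Str X} (hpB : p.1.2.Finite)
    (hpair : ∃ a ∈ LsetP p, ∃ a' ∈ LsetP p, a ≠ a') (q : Str X) :
    q ∈ CoOf p ↔ q.1.2 = p.1.2 ∧ ∃ x ∈ p.1.1, q.1.1 = p.1.1 \ {x} := by
  constructor
  · rintro ⟨hmem, hne, hmax⟩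
    obtain ⟨hq2, hq1⟩ := (hX.mem_sset_iff hpB q).mp hmem
    have hne1 : q.1.1 ≠ p.1.1 := fun e => hne (Str.ext e hq2)
    obtain ⟨x, hxp, hxq⟩ := Set.exists_of_ssubset ⟨hq1, fun h => hne1 (Set.Subset.antisymm hq1 h)⟩
    set q'' : Str X := ⟨(p.1.1 \ {x}, p.1.2), hX.diff_strMem hpB hpair x⟩ with hq''
    have hm1 : q'' ∈ SameSet p := (hX.mem_sset_iff hpB q'').mpr ⟨rfl, Set.diff_subset⟩
    have hne'' : q'' ≠ p := by
      intro e
      have := congrArg (fun t : Str X => t.1.1) e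
      change p.1.1 \ {x} = p.1.1 at this
      have hx : x ∈ p.1.1 \ {x} := by rw [this]; exact hxp
      exact hx.2 rfl
    have hm2 : q ∈ SameSet q'' := by
      refine (hX.mem_sset_iff (v := q'') hpB q).mpr ⟨hq2, ?_⟩
      intro y hy
      refine ⟨hq1 hy, fun h => hxq ?_⟩
      rw [Set.mem_singleton_iff] at h
      rwa [← h]
    have he := hmax q'' hm1 hne'' hm2
    refine ⟨hq2, x, hxp, ?_⟩
    have := congrArg (fun t : Str X => t.1.1) he
    simpa using this.symm
  · rintro ⟨hq2, x, hxp, hq1⟩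
    have hmem : q ∈ SameSet p := by
      refine (hX.mem_sset_iff hpB q).mpr ⟨hq2, ?_⟩
      rw [hq1]; exact Set.diff_subset
    have hne : q ≠ p := by
      intro e
      have h' : q.1.1 = p.1.1 := congrArg (fun t : Str X => t.1.1) e
      rw [hq1] at h'
      have hx' : x ∈ p.1.1 \ {x} := by rw [h']; exact hxp
      exact hx'.2 rfl
    refine ⟨hmem, hne, ?_⟩
    intro q' hq'mem hq'ne hqq'
    obtain ⟨e2, e1⟩ := (hX.mem_sset_iff hpB q').mp hq'mem
    obtain ⟨f2, f1⟩ := (hX.mem_sset_iff (v := q') (by rw [e2]; exact hpB) q).mp hqq'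
    rw [hq1] at f1
    have hq'ne1 : q'.1.1 ≠ p.1.1 := fun e => hq'ne (Str.ext e e2)
    have hxq' : x ∉ q'.1.1 := by
      intro hx
      apply hq'ne1
      apply Set.Subset.antisymm e1
      intro z hz
      by_cases hzx : z = x
      · rwa [hzx]
      · exact f1 ⟨hz, by simp [hzx]⟩
    have heq : q'.1.1 = p.1.1 \ {x} := by
      apply Set.Subset.antisymm
      · intro y hy
        refine ⟨e1 hy, fun h => ?_⟩
        rw [Set.mem_singleton_iff] at h
        exact hxq' (h ▸ hy)
      · exact f1
    exact Str.ext (heq.trans hq1.symm) (e2.trans hq2.symm)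

lemma IsJPoset.atoms_ncard (hX : IsJPoset X) {p : Str X} (hpB : p.1.2.Finite) :
    (AtomsOf p).ncard = ell X p.1.1 p.1.2 := by
  classical
  rw [ell_eq_lset]
  set f : X → Str X := fun x =>
    if h : x ∈ LsetP p then ⟨({x}, p.1.2), hX.singleton_strMem hpB h⟩ else p with hf
  have hfx : ∀ x (h : x ∈ LsetP p), f x = ⟨({x}, p.1.2), hX.singleton_strMem hpB h⟩ :=
    fun x h => dif_pos h
  have himg : AtomsOf p = f '' LsetP p := by
    ext q
    rw [hX.mem_atoms_iff hpB]
    constructor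
    · rintro ⟨hq2, x, hxL, hq1⟩
      refine ⟨x, hxL, ?_⟩
      rw [hfx x hxL]
      symm
      exact Str.ext hq1 hq2
    · rintro ⟨x, hxL, rfl⟩
      rw [hfx x hxL]
      exact ⟨rfl, x, hxL, rfl⟩
  rw [himg, Set.ncard_image_of_injOn]
  intro x hx y hy hxy
  rw [hfx x hx, hfx y hy] at hxy
  have := congrArg (fun t : Str X => t.1.1) hxy
  simpa using this

lemma IsJPoset.co_ncard (hX : IsJPoset X) {p : Str X} (hpB : p.1.2.Finite)
    (hpair : ∃ a ∈ LsetP p, ∃ a' ∈ LsetP p, a ≠ a') :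
    (CoOf p).ncard = p.1.1.ncard := by
  classical
  set g : X → Str X := fun x =>
    if h : x ∈ p.1.1 then ⟨(p.1.1 \ {x}, p.1.2), hX.diff_strMem hpB hpair x⟩ else p with hg
  have hgx : ∀ x, x ∈ p.1.1 → g x = ⟨(p.1.1 \ {x}, p.1.2), hX.diff_strMem hpB hpair x⟩ :=
    fun x h => dif_pos h
  have himg : CoOf p = g '' p.1.1 := by
    ext q
    rw [hX.mem_co_iff hpB hpair]
    constructor
    · rintro ⟨hq2, x, hxp, hq1⟩
      refine ⟨x, hxp, ?_⟩
      rw [hgx x hxp]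
      symm
      exact Str.ext hq1 hq2
    · rintro ⟨x, hxp, rfl⟩
      rw [hgx x hxp]
      exact ⟨rfl, x, hxp, rfl⟩
  rw [himg, Set.ncard_image_of_injOn]
  intro x hx y hy hxy
  rw [hgx x hx, hgx y hy] at hxy
  have heq : p.1.1 \ {x} = p.1.1 \ {y} := by
    have := congrArg (fun t : Str X => t.1.1) hxy
    simpa using this
  by_contra hne
  have : x ∈ p.1.1 \ {y} := ⟨hx, by simp [hne]⟩
  rw [← heq] at this
  exact this.2 rfl

end Atoms

section Transfer
variable {X Y : Type*} [PartialOrder X] [PartialOrder Y] {φ : Str X → Str Y}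

lemma phi_inj (hord : ∀ p q : Str X, strLE p q ↔ strLE (φ p) (φ q)) :
    Function.Injective φ := by
  intro a b h
  have h1 : strLE a b := (hord a b).mpr (by rw [h]; exact strLE_refl _)
  have h2 : strLE b a := (hord b a).mpr (by rw [h]; exact strLE_refl _)
  exact strLE_antisymm h1 h2

lemma compat_transfer (hsurj : Function.Surjective φ)
    (hord : ∀ p q : Str X, strLE p q ↔ strLE (φ p) (φ q)) (u v : Str X) :
    Compat u v ↔ Compat (φ u) (φ v) := by
  constructor
  · rintro ⟨w, h1, h2⟩; exact ⟨φ w, (hord u w).mp h1, (hord v w).mp h2⟩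
  · rintro ⟨w', h1, h2⟩
    obtain ⟨w, rfl⟩ := hsurj w'
    exact ⟨w, (hord u w).mpr h1, (hord v w).mpr h2⟩

lemma sset_transfer (hsurj : Function.Surjective φ)
    (hord : ∀ p q : Str X, strLE p q ↔ strLE (φ p) (φ q)) (q v : Str X) :
    q ∈ SameSet v ↔ φ q ∈ SameSet (φ v) := by
  have hinj := phi_inj hord
  constructor
  · rintro ⟨hsc, hdom⟩
    constructor
    · intro z'
      obtain ⟨z, rfl⟩ := hsurj z'
      rw [← compat_transfer hsurj hord, ← compat_transfer hsurj hord]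
      exact hsc z
    · intro r' hr'
      obtain ⟨r, rfl⟩ := hsurj r'
      have hlt : strLT v r := ⟨(hord v r).mpr hr'.1, fun e => hr'.2 (congrArg φ e)⟩
      exact (hord q r).mp (hdom r hlt)
  · rintro ⟨hsc, hdom⟩
    constructor
    · intro z
      rw [compat_transfer hsurj hord, compat_transfer hsurj hord]
      exact hsc (φ z)
    · intro r hr
      have hlt : strLT (φ v) (φ r) := ⟨(hord v r).mp hr.1, fun e => hr.2 (hinj e)⟩
      exact (hord q r).mpr (hdom (φ r) hlt)

lemma atoms_transfer (hsurj : Function.Surjective φ)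
    (hord : ∀ p q : Str X, strLE p q ↔ strLE (φ p) (φ q)) (p : Str X) :
    AtomsOf (φ p) = φ '' AtomsOf p := by
  have hinj := phi_inj hord
  ext q'
  constructor
  · rintro ⟨hmem, hmin⟩
    obtain ⟨q, rfl⟩ := hsurj q'
    refine ⟨q, ⟨(sset_transfer hsurj hord q p).mpr hmem, ?_⟩, rfl⟩
    intro q1 h1 h2
    exact hinj (hmin (φ q1) ((sset_transfer hsurj hord q1 p).mp h1)
      ((sset_transfer hsurj hord q1 q).mp h2))
  · rintro ⟨q, ⟨hmem, hmin⟩, rfl⟩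
    refine ⟨(sset_transfer hsurj hord q p).mp hmem, ?_⟩
    intro q1' h1 h2
    obtain ⟨q1, rfl⟩ := hsurj q1'
    exact congrArg φ (hmin q1 ((sset_transfer hsurj hord q1 p).mpr h1)
      ((sset_transfer hsurj hord q1 q).mpr h2))

lemma co_transfer (hsurj : Function.Surjective φ)
    (hord : ∀ p q : Str X, strLE p q ↔ strLE (φ p) (φ q)) (p : Str X) :
    CoOf (φ p) = φ '' CoOf p := by
  have hinj := phi_inj hord
  ext q'
  constructor
  · rintro ⟨hmem, hne, hmax⟩
    obtain ⟨q, rfl⟩ := hsurj q'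
    refine ⟨q, ⟨(sset_transfer hsurj hord q p).mpr hmem, fun e => hne (congrArg φ e), ?_⟩, rfl⟩
    intro q1 h1 hne1 h2
    exact hinj (hmax (φ q1) ((sset_transfer hsurj hord q1 p).mp h1)
      (fun e => hne1 (hinj e)) ((sset_transfer hsurj hord q q1).mp h2))
  · rintro ⟨q, ⟨hmem, hne, hmax⟩, rfl⟩
    refine ⟨(sset_transfer hsurj hord q p).mp hmem, fun e => hne (hinj e), ?_⟩
    intro q1' h1 hne1 h2
    obtain ⟨q1, rfl⟩ := hsurj q1'
    exact congrArg φ (hmax q1 ((sset_transfer hsurj hord q1 p).mpr h1)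
      (fun e => hne1 (congrArg φ e)) ((sset_transfer hsurj hord q q1).mpr h2))

end Transfer


/-- If `φ : Str X → Str Y` is an isomorphism, `B ⊆ X₂` is finite and nonempty,
and `(A,B) ∈ (Str X)_B` has height greater than `0` in `(Str X)_B`, then writing
`φ(A,B) = (S,T)` we have `ℓ(S,T) = ℓ(A,B)` and `η(S,T) = η(A,B)`. -/
theorem stmt_16 {X Y : Type*} [PartialOrder X] [PartialOrder Y]
    (hX : IsJPoset X) (hY : IsJPoset Y)
    (φ : Str X → Str Y) (hφsurj : Function.Surjective φ)
    (hφord : ∀ p q : Str X, strLE p q ↔ strLE (φ p) (φ q))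
    (B : Set X) (hB2 : B ⊆ level X 2) (hBf : B.Finite) (hBne : B.Nonempty)
    (p : Str X) (hpB : p.1.2 = B)
    (hpos : ∃ q : Str X, q.1.2 = B ∧ strLT q p) :
    ell Y (φ p).1.1 (φ p).1.2 = ell X p.1.1 p.1.2 ∧
    eta Y (φ p).1.1 (φ p).1.2 = eta X p.1.1 p.1.2 := by
  obtain ⟨q0, -, hq0⟩ := hpos
  have hinj : Function.Injective φ := phi_inj hφord
  have hpB2 : p.1.2.Finite := by rw [hpB]; exact hBf
  have hpairX := hX.lset_pair hq0
  have hq0Y : strLT (φ q0) (φ p) := ⟨(hφord q0 p).mp hq0.1, fun e => hq0.2 (hinj e)⟩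
  have hφpB : (φ p).1.2.Finite := (finite_of_pos hq0Y).2.2.1
  have hpairY := hY.lset_pair hq0Y
  have hatoms : AtomsOf (φ p) = φ '' AtomsOf p := atoms_transfer hφsurj hφord p
  have hco : CoOf (φ p) = φ '' CoOf p := co_transfer hφsurj hφord p
  have e1 : ell Y (φ p).1.1 (φ p).1.2 = ell X p.1.1 p.1.2 := by
    rw [← hY.atoms_ncard hφpB, ← hX.atoms_ncard hpB2, hatoms,
      Set.ncard_image_of_injective _ hinj]
  have e2 : (φ p).1.1.ncard = p.1.1.ncard := by
    rw [← hY.co_ncard hφpB hpairY, ← hX.co_ncard hpB2 hpairX, hco,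
      Set.ncard_image_of_injective _ hinj]
  refine ⟨e1, ?_⟩
  show (φ p).1.1.ncard - ell Y (φ p).1.1 (φ p).1.2 = p.1.1.ncard - ell X p.1.1 p.1.2
  rw [e1, e2]
end

section
/- Let X and Y be J-posets. Then X and Y are isomorphic as posets if and only if Str X and Str Y are isomorphic as posets. Specifically: if ρ: X → Y is an isomorphism, then the map φ: Str X → Str Y given by φ(A,B) = (ρ(A), ρ(B)) for all (A,B) ∈ Str X is an isomorphism; and conversely, if φ: Str X → Str Y is any isomorphism, then there exists an isomorphism ρ: X → Y such that φ(A,B) = (ρ(A), ρ(B)) for all (A,B) ∈ Str X. -/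
open Order Set

namespace JP

variable {X : Type*} [PartialOrder X]

lemma ht_le_two (hX : IsJPoset X) (x : X) : Order.height x ≤ 2 := by
  have h := Order.height_le_krullDim x
  rw [hX.dim2] at h
  rw [show (2 : WithBot ℕ∞) = ((2:ℕ∞) : WithBot ℕ∞) from rfl] at h
  exact WithBot.coe_le_coe.mp h

lemma ht_ne_top (hX : IsJPoset X) (x : X) : Order.height x ≠ ⊤ := by
  intro h
  have := ht_le_two hX x
  rw [h] at this
  simp at this

lemma ht_lt_of_lt (hX : IsJPoset X) {x y : X} (h : x < y) :
    Order.height x < Order.height y :=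
  Order.height_strictMono h (lt_top_iff_ne_top.mpr (ht_ne_top hX x))

lemma mem_level {x : X} {i : ℕ} : x ∈ level X i ↔ Order.height x = (i : ℕ∞) := Iff.rfl

lemma trichotomy (hX : IsJPoset X) (x : X) :
    Order.height x = 0 ∨ x ∈ level X 1 ∨ x ∈ level X 2 := by
  obtain ⟨n, hn⟩ : ∃ n : ℕ, Order.height x = (n : ℕ∞) := by
    lift Order.height x to ℕ using (ht_ne_top hX x) with n
    exact ⟨n, rfl⟩
  have h2 : (n : ℕ∞) ≤ 2 := hn ▸ ht_le_two hX x
  have hn2 : n ≤ 2 := by exact_mod_cast h2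
  interval_cases n
  · left; simpa using hn
  · right; left; exact hn
  · right; right; exact hn

lemma level_eq_level {x : X} {i j : ℕ} (hx : x ∈ level X i) (hy : x ∈ level X j) : i = j := by
  rw [mem_level] at hx hy
  rw [hx] at hy
  exact_mod_cast hy

lemma lvl1_ne_lvl2 {x : X} (h : x ∈ level X 1) : x ∉ level X 2 := by
  intro h2
  have := level_eq_level h h2
  omega

lemma lvl2_of_lvl1_lt (hX : IsJPoset X) {x z : X} (h1 : x ∈ level X 1) (h : x < z) :
    z ∈ level X 2 := by
  have hlt := ht_lt_of_lt hX h
  rw [mem_level.mp h1] at hlt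
  have hle : Order.height z ≤ 2 := ht_le_two hX z
  rw [mem_level]
  obtain ⟨n, hn⟩ : ∃ n : ℕ, Order.height z = (n : ℕ∞) := by
    lift Order.height z to ℕ using (ht_ne_top hX z) with n
    exact ⟨n, rfl⟩
  rw [hn] at hlt hle ⊢
  have : (1:ℕ) < n := by exact_mod_cast hlt
  have : n ≤ 2 := by exact_mod_cast hle
  congr 1
  omega

lemma antichain1 {x y : X} (hX : IsJPoset X) (hx : x ∈ level X 1) (hy : y ∈ level X 1)
    (h : x ≤ y) : x = y := by
  rcases h.lt_or_eq with h | h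
  · exact absurd (lvl2_of_lvl1_lt hX hx h) (lvl1_ne_lvl2 hy)
  · exact h

lemma lvl2_not_lt (hX : IsJPoset X) {m z : X} (hm : m ∈ level X 2) (h : m < z) : False := by
  have hlt := ht_lt_of_lt hX h
  rw [mem_level.mp hm] at hlt
  have h2 : (2:ℕ∞) < Order.height z := by exact_mod_cast hlt
  exact absurd (ht_le_two hX z) (not_le.mpr h2)

lemma antichain2 {x y : X} (hX : IsJPoset X) (hx : x ∈ level X 2) (h : x ≤ y) : x = y := by
  rcases h.lt_or_eq with h | h
  · exact absurd (lvl2_not_lt hX hx h) not_false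
  · exact h

lemma not_le_of_levels (hX : IsJPoset X) {x y : X} {i j : ℕ} (hx : x ∈ level X i)
    (hy : y ∈ level X j) (hij : j < i) : ¬ x ≤ y := by
  intro h
  have := Order.height_mono h
  rw [mem_level.mp hx, mem_level.mp hy] at this
  exact absurd this (by exact_mod_cast Nat.not_le.mpr hij)

/-- every element has a minimal element below it -/
lemma exists_min_le (hX : IsJPoset X) (x : X) : ∃ w, IsMin w ∧ w ≤ x := by
  rcases eq_or_ne (Order.height x) 0 with h | h
  · exact ⟨x, Order.height_eq_zero.mp h, le_refl x⟩
  · have hpos : (0:ℕ) < Order.height x := pos_iff_ne_zero.mpr h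
    obtain ⟨y, hyx, hy0⟩ := (Order.coe_lt_height_iff
      (lt_top_iff_ne_top.mpr (ht_ne_top hX x))).mp (by exact_mod_cast hpos)
    exact ⟨y, Order.height_eq_zero.mp (by exact_mod_cast hy0), hyx.le⟩

lemma min_le_all (hX : IsJPoset X) {r : X} (hr : IsMin r) (x : X) : r ≤ x := by
  obtain ⟨w, hw, hwx⟩ := exists_min_le hX x
  obtain ⟨r₀, _, hall⟩ := hX.uniqueMin
  rw [hall r hr, ← hall w hw]
  exact hwx

/-- the key consequence of (J3) -/
lemma exists_K (hX : IsJPoset X) {m : X} (hm : m ∈ level X 2) {G : Set X} (hG : G.Finite) :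
    ∃ K : Set X, K ⊆ level X 1 ∧ K.Finite ∧ K.Nonempty ∧ (∀ k ∈ K, k ∉ G) ∧
      (∀ k ∈ K, k < m) ∧ (∀ y, (∀ k ∈ K, k ≤ y) → y = m) := by
  obtain ⟨K, hK1, hKfin, hKdisj, hKmub⟩ :=
    hX.j3 m hm (G ∩ level X 1) (inter_subset_right) (hG.inter_of_left _)
  have hmK : m ∈ mub X K := hKmub ▸ rfl
  have hub : m ∈ upperBounds K := hmK.1
  have hmin : ∀ y ∈ upperBounds K, ¬ y < m := hmK.2
  -- K is not empty
  have hKne : K.Nonempty := by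
    by_contra h
    rw [not_nonempty_iff_eq_empty] at h
    obtain ⟨r, hr, -⟩ := hX.uniqueMin
    have hrub : r ∈ upperBounds K := by simp [h, upperBounds]
    have hrm : r < m := lt_of_le_of_ne (min_le_all hX hr m) (by
      intro h'
      subst h'
      have h0 : r ∈ level X 0 := by
        rw [mem_level]
        simpa using Order.height_eq_zero.mpr hr
      have := level_eq_level h0 hm
      omega)
    exact hmin r hrub hrm
  -- K is not a singleton
  have hKnt : K.Nontrivial := by
    rcases Set.subsingleton_or_nontrivial K with h | h
    swap
    · exact h
    · exfalso
      obtain ⟨k, hk⟩ := hKne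
      have hKk : K = {k} := (h.eq_singleton_of_mem hk)
      have hkub : k ∈ upperBounds K := by
        intro y hy
        rw [hKk] at hy
        simp at hy
        exact hy ▸ le_refl k
      have hkm : k < m := lt_of_le_of_ne (hub hk) (by
        intro h'
        exact lvl1_ne_lvl2 (hK1 hk) (h' ▸ hm))
      exact hmin k hkub hkm
  obtain ⟨k₁, hk₁, k₂, hk₂, hk12⟩ := hKnt
  have hltm : ∀ k ∈ K, k < m := fun k hk =>
    lt_of_le_of_ne (hub hk) (fun h' => lvl1_ne_lvl2 (hK1 hk) (h' ▸ hm))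
  -- every upper bound of K is in level 2
  have hub2 : ∀ y ∈ upperBounds K, y ∈ level X 2 := by
    intro y hy
    rcases (hy hk₁).lt_or_eq with h | h
    · exact lvl2_of_lvl1_lt hX (hK1 hk₁) h
    · exfalso
      subst h
      exact hk12 (antichain1 hX (hK1 hk₂) (hK1 hk₁) (hy hk₂)).symm
  refine ⟨K, hK1, hKfin, hKne, fun k hk => fun hkG => (hKdisj.ne_of_mem hk ⟨hkG, hK1 hk⟩) rfl,
    hltm, ?_⟩
  intro y hy
  have hyub : y ∈ upperBounds K := fun z hz => hy z hz
  by_contra hne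
  have : y ∉ mub X K := by
    rw [hKmub]
    simpa using hne
  rw [mub] at this
  simp only [mem_setOf_eq, mem_sep_iff] at this
  push_neg at this
  obtain ⟨v, hv, hvy⟩ := this hyub
  exact lvl2_not_lt hX (hub2 v hv) hvy

lemma exists_lb2 (hX : IsJPoset X) {m μ : X} (hm : m ∈ level X 2) (hμ : μ ∈ level X 2) :
    ∃ t ∈ level X 1, t < m ∧ t < μ := by
  obtain ⟨t, ht1, ht⟩ := hX.j4 {m, μ} (by
      intro z hz; rcases hz with h | h <;> simp_all)
    ((Set.finite_singleton μ).insert m) ⟨m, by simp⟩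
  exact ⟨t, ht1, ht m (by simp), ht μ (by simp)⟩

lemma exists_lb1 (hX : IsJPoset X) {m : X} (hm : m ∈ level X 2) :
    ∃ t ∈ level X 1, t < m := by
  obtain ⟨t, ht1, h, _⟩ := exists_lb2 hX hm hm
  exact ⟨t, ht1, h⟩

lemma exists_above (hX : IsJPoset X) {a : X} (h : a ∈ level X 1) :
    ∃ m, m ∈ level X 2 ∧ a < m := by
  obtain ⟨z, hz⟩ := (hX.j2 a h).nonempty
  exact ⟨z, lvl2_of_lvl1_lt hX h hz, hz⟩

lemma bset_eq (hX : IsJPoset X) {a : X} (h : a ∈ level X 1) :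
    {z ∈ level X 2 | a < z} = {z | a < z} := by
  ext z
  simp only [mem_setOf_eq, mem_sep_iff, and_iff_right_iff_imp]
  exact fun hz => lvl2_of_lvl1_lt hX h hz

lemma bset_infinite (hX : IsJPoset X) {a : X} (h : a ∈ level X 1) :
    {z ∈ level X 2 | a < z}.Infinite := by
  rw [bset_eq hX h]
  exact hX.j2 a h




lemma strA_lvl1 (p : Str X) : p.1.1 ⊆ level X 1 := p.2.1

lemma strB_lvl2 (p : Str X) : p.1.2 ⊆ level X 2 := p.2.2.1

lemma strWit (p : Str X) : ∃ a ∈ p.1.1, ∀ b ∈ p.1.2, a < b := p.2.2.2.2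

lemma strA_fin (p : Str X) : p.1.1.Finite := by
  rcases p.2.2.2.1 with h | ⟨x, _, hA, _⟩
  · exact h.1
  · rw [hA]; exact finite_singleton x

lemma strA_ne (p : Str X) : p.1.1.Nonempty := by
  obtain ⟨a, ha, -⟩ := strWit p
  exact ⟨a, ha⟩

lemma strB_ne (hX : IsJPoset X) (p : Str X) : p.1.2.Nonempty := by
  rcases p.2.2.2.1 with h | ⟨x, hx, _, hB⟩
  · exact h.2.2.2
  · rw [hB]
    exact (bset_infinite hX hx).nonempty

lemma str_eq {p q : Str X} (hA : p.1.1 = q.1.1) (hB : p.1.2 = q.1.2) : p = q :=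
  Subtype.ext (Prod.ext hA hB)

lemma strLE_refl (p : Str X) : strLE p p := Or.inl ⟨rfl, rfl⟩

lemma strLT_iff_dom {p q : Str X} :
    strLT p q ↔ ∃ W, Dominates X q.1.1 q.1.2 p.1.1 p.1.2 W := by
  constructor
  · rintro ⟨hle, hne⟩
    rcases hle with ⟨hA, hB⟩ | h
    · exact absurd (str_eq hA hB) hne
    · exact h
  · rintro ⟨W, hW⟩
    refine ⟨Or.inr ⟨W, hW⟩, ?_⟩
    intro h
    subst h
    exact (ssubset_irrefl _) hW.1

lemma strLE_of_dom {p q : Str X} (h : ∃ W, Dominates X q.1.1 q.1.2 p.1.1 p.1.2 W) :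
    strLE p q := Or.inr h

lemma strLE_sub {p q : Str X} (h : strLE p q) : p.1.1 ⊆ q.1.1 ∧ q.1.2 ⊆ p.1.2 := by
  rcases h with ⟨hA, hB⟩ | ⟨W, hW⟩
  · exact ⟨hA ▸ subset_rfl, hB ▸ subset_rfl⟩
  · exact ⟨hW.1.subset, hW.2.1⟩

lemma strLE_antisymm {p q : Str X} (h1 : strLE p q) (h2 : strLE q p) : p = q := by
  rcases h1 with ⟨hA, hB⟩ | ⟨W, hW⟩
  · exact str_eq hA hB
  · rcases h2 with ⟨hA, hB⟩ | ⟨W', hW'⟩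
    · exact (str_eq hA hB).symm
    · exact absurd (hW.1.trans hW'.1) (ssubset_irrefl _)

lemma strLT_le {p q : Str X} (h : strLT p q) : strLE p q := h.1

/-- helper to build finite members of Str -/
lemma mkMem {A B : Set X} (h1 : A ⊆ level X 1) (h2 : B ⊆ level X 2) (hf : A.Finite)
    (hbf : B.Finite) (hbn : B.Nonempty) (hw : ∃ a ∈ A, ∀ b ∈ B, a < b) : StrMem X A B := by
  refine ⟨h1, h2, Or.inl ⟨hf, ?_, hbf, hbn⟩, hw⟩
  obtain ⟨a, ha, -⟩ := hw
  exact ⟨a, ha⟩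

/-- THE key upwards construction -/
lemma exists_up (hX : IsJPoset X) (p : Str X) {m : X} (hm : m ∈ p.1.2) (G : Set X)
    (hG : G.Finite) :
    ∃ r : Str X, r.1.2 = {m} ∧ p.1.1 ⊆ r.1.1 ∧ (∀ y ∈ r.1.1, y ∉ p.1.1 → y ∉ G) ∧
      strLT p r := by
  have hm2 : m ∈ level X 2 := strB_lvl2 p hm
  obtain ⟨K, hK1, hKfin, hKne, hKG, hKlt, hKub⟩ :=
    exists_K hX hm2 (hG.union (strA_fin p))
  obtain ⟨k₀, hk₀⟩ := hKne
  have hk₀A : k₀ ∉ p.1.1 := fun h => hKG k₀ hk₀ (Or.inr h)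
  refine ⟨⟨(p.1.1 ∪ K, {m}), ?_⟩, rfl, subset_union_left, ?_, ?_⟩
  · refine mkMem (union_subset (strA_lvl1 p) hK1) (singleton_subset_iff.mpr hm2)
      ((strA_fin p).union hKfin) (finite_singleton m) (singleton_nonempty m)
      ⟨k₀, Or.inr hk₀, ?_⟩
    intro b hb
    rw [mem_singleton_iff] at hb
    exact hb ▸ hKlt k₀ hk₀
  · intro y hy hyp
    rcases hy with h | h
    · exact absurd h hyp
    · exact fun hG' => hKG y h (Or.inl hG')
  · rw [strLT_iff_dom]
    refine ⟨K, ⟨subset_union_left, fun h => hk₀A (h (Or.inr hk₀))⟩,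
      singleton_subset_iff.mpr hm, subset_union_right, ⟨k₀, hk₀⟩, ?_, ?_⟩
    · intro w hw d hd
      rw [mem_singleton_iff] at hd
      exact hd ▸ hKlt w hw
    · intro a _ μ _ hμ
      rw [mem_singleton_iff]
      exact hKub μ (fun k hk => (hμ k hk).le)

/-- common upper bound -/
def compat (p q : Str X) : Prop := ∃ s, strLE p s ∧ strLE q s

lemma compat_inter {hX : IsJPoset X} {p q : Str X} (h : compat p q) :
    (p.1.2 ∩ q.1.2).Nonempty := by
  obtain ⟨s, h1, h2⟩ := h
  obtain ⟨b, hb⟩ := strB_ne hX s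
  exact ⟨b, (strLE_sub h1).2 hb, (strLE_sub h2).2 hb⟩

lemma compat_of_mem (hX : IsJPoset X) {p q : Str X} {m : X} (hp : m ∈ p.1.2)
    (hq : m ∈ q.1.2) : compat p q := by
  have hm2 : m ∈ level X 2 := strB_lvl2 p hp
  obtain ⟨K, hK1, hKfin, hKne, hKG, hKlt, hKub⟩ :=
    exists_K hX hm2 ((strA_fin p).union (strA_fin q))
  obtain ⟨k₀, hk₀⟩ := hKne
  have hmem : StrMem X (p.1.1 ∪ q.1.1 ∪ K) {m} := by
    refine mkMem (union_subset (union_subset (strA_lvl1 p) (strA_lvl1 q)) hK1)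
      (singleton_subset_iff.mpr hm2) (((strA_fin p).union (strA_fin q)).union hKfin)
      (finite_singleton m) (singleton_nonempty m) ⟨k₀, Or.inr hk₀, ?_⟩
    intro b hb
    rw [mem_singleton_iff] at hb
    exact hb ▸ hKlt k₀ hk₀
  set s : Str X := ⟨(p.1.1 ∪ q.1.1 ∪ K, {m}), hmem⟩ with hs
  have key : ∀ (t : Str X), m ∈ t.1.2 → t.1.1 ⊆ p.1.1 ∪ q.1.1 → strLE t s := by
    intro t hmt hsub
    refine strLE_of_dom ⟨K, ⟨hsub.trans subset_union_left, ?_⟩,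
      singleton_subset_iff.mpr hmt, subset_union_right, ⟨k₀, hk₀⟩, ?_, ?_⟩
    · intro h
      exact hKG k₀ hk₀ (hsub (h (Or.inr hk₀)))
    · intro w hw d hd
      rw [mem_singleton_iff] at hd
      exact hd ▸ hKlt w hw
    · intro a _ μ _ hμ
      rw [mem_singleton_iff]
      exact hKub μ (fun k hk => (hμ k hk).le)
  exact ⟨s, key p hp (subset_union_left), key q hq (subset_union_right)⟩

/-- "SingD" predicate: all pairs of extensions are compatible -/
def allCompatAbove (q : Str X) : Prop :=
  ∀ r₁ r₂ : Str X, strLE q r₁ → strLE q r₂ → compat r₁ r₂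

lemma singD_iff (hX : IsJPoset X) (q : Str X) :
    allCompatAbove q ↔ ∃ m, q.1.2 = {m} := by
  constructor
  · intro h
    by_contra hns
    obtain ⟨m, hm⟩ := strB_ne hX q
    have : ∃ m' ∈ q.1.2, m' ≠ m := by
      by_contra h'
      push_neg at h'
      exact hns ⟨m, Set.eq_singleton_iff_unique_mem.mpr ⟨hm, h'⟩⟩
    obtain ⟨m', hm', hne⟩ := this
    obtain ⟨r, hr2, -, -, hr⟩ := exists_up hX q hm ∅ finite_empty
    obtain ⟨r', hr'2, -, -, hr'⟩ := exists_up hX q hm' ∅ finite_empty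
    obtain ⟨b, hb1, hb2⟩ := compat_inter (hX := hX) (h r r' hr.1 hr'.1)
    rw [hr2, mem_singleton_iff] at hb1
    rw [hr'2, mem_singleton_iff] at hb2
    exact hne (hb2 ▸ hb1 ▸ rfl)
  · rintro ⟨m, hm⟩ r₁ r₂ h1 h2
    have hm1 : m ∈ r₁.1.2 := by
      obtain ⟨b, hb⟩ := strB_ne hX r₁
      have := (strLE_sub h1).2 hb
      rw [hm, mem_singleton_iff] at this
      exact this ▸ hb
    have hm2 : m ∈ r₂.1.2 := by
      obtain ⟨b, hb⟩ := strB_ne hX r₂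
      have := (strLE_sub h2).2 hb
      rw [hm, mem_singleton_iff] at this
      exact this ▸ hb
    exact compat_of_mem hX hm1 hm2


/-! ## The reconstruction setting -/

structure Recon (X Y : Type*) [PartialOrder X] [PartialOrder Y] where
  hX : IsJPoset X
  hY : IsJPoset Y
  φ : Str X → Str Y
  ψ : Str Y → Str X
  hpsiphi : ∀ p, ψ (φ p) = p
  hphipsi : ∀ q, φ (ψ q) = q
  hle : ∀ p q : Str X, strLE p q ↔ strLE (φ p) (φ q)

variable {Y : Type*} [PartialOrder Y]

lemma Recon.hle' (R : Recon X Y) (p q : Str Y) : strLE p q ↔ strLE (R.ψ p) (R.ψ q) := by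
  rw [R.hle (R.ψ p) (R.ψ q), R.hphipsi, R.hphipsi]

def Recon.symm (R : Recon X Y) : Recon Y X :=
  ⟨R.hY, R.hX, R.ψ, R.φ, R.hphipsi, R.hpsiphi, R.hle'⟩

lemma Recon.inj (R : Recon X Y) : Function.Injective R.φ := by
  intro p q h
  rw [← R.hpsiphi p, ← R.hpsiphi q, h]

lemma lt_transfer (R : Recon X Y) (p q : Str X) : strLT p q ↔ strLT (R.φ p) (R.φ q) := by
  unfold strLT
  rw [← R.hle p q]
  constructor
  · rintro ⟨h1, h2⟩
    exact ⟨h1, fun h => h2 (R.inj h)⟩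
  · rintro ⟨h1, h2⟩
    exact ⟨h1, fun h => h2 (h ▸ rfl)⟩

lemma lt_transfer_psi (R : Recon X Y) (p : Str X) (r : Str Y) :
    strLT (R.φ p) r ↔ strLT p (R.ψ r) := by
  rw [lt_transfer R p (R.ψ r), R.hphipsi]

lemma compat_transfer (R : Recon X Y) {p q : Str X} (h : compat p q) :
    compat (R.φ p) (R.φ q) := by
  obtain ⟨s, h1, h2⟩ := h
  exact ⟨R.φ s, (R.hle p s).mp h1, (R.hle q s).mp h2⟩


lemma acab_transfer (R : Recon X Y) {q : Str X} (h : allCompatAbove q) :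
    allCompatAbove (R.φ q) := by
  intro r₁ r₂ h1 h2
  have h1' : strLE q (R.ψ r₁) := by rw [R.hle, R.hphipsi]; exact h1
  have h2' : strLE q (R.ψ r₂) := by rw [R.hle, R.hphipsi]; exact h2
  obtain ⟨s, hs1, hs2⟩ := h (R.ψ r₁) (R.ψ r₂) h1' h2'
  refine ⟨R.φ s, ?_, ?_⟩
  · have := (R.hle (R.ψ r₁) s).mp hs1
    rwa [R.hphipsi] at this
  · have := (R.hle (R.ψ r₂) s).mp hs2
    rwa [R.hphipsi] at this

/-- a canonical element of the class of `m` -/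
noncomputable def classElem (hX : IsJPoset X) {m : X} (hm : m ∈ level X 2) : Str X :=
  ⟨({(exists_lb1 hX hm).choose}, {m}),
    mkMem (singleton_subset_iff.mpr (exists_lb1 hX hm).choose_spec.1)
      (singleton_subset_iff.mpr hm) (finite_singleton _) (finite_singleton _)
      (singleton_nonempty _)
      ⟨_, mem_singleton _, fun b hb => by
        rw [mem_singleton_iff] at hb
        rw [hb]
        exact (exists_lb1 hX hm).choose_spec.2⟩⟩

open Classical in
noncomputable def rho2 (R : Recon X Y) (m : X) : Y :=
  if hm : m ∈ level X 2 then (strB_ne R.hY (R.φ (classElem R.hX hm))).some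
  else R.hY.uniqueMin.exists.choose

lemma rho2_spec (R : Recon X Y) {m : X} {q : Str X} (hq : q.1.2 = {m}) :
    (R.φ q).1.2 = {rho2 R m} := by
  have hmq : m ∈ q.1.2 := by rw [hq]; exact mem_singleton _
  have hm2 : m ∈ level X 2 := strB_lvl2 q hmq
  have hcq : (classElem R.hX hm2).1.2 = {m} := rfl
  have hmc : m ∈ (classElem R.hX hm2).1.2 := mem_singleton _
  obtain ⟨n, hn⟩ := (singD_iff R.hY (R.φ q)).mp
    (acab_transfer R ((singD_iff R.hX q).mpr ⟨m, hq⟩))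
  obtain ⟨n', hn'⟩ := (singD_iff R.hY (R.φ (classElem R.hX hm2))).mp
    (acab_transfer R ((singD_iff R.hX _).mpr ⟨m, hcq⟩))
  have hcompat := compat_transfer R (compat_of_mem R.hX hmq hmc)
  obtain ⟨b, hb1, hb2⟩ := compat_inter (hX := R.hY) hcompat
  rw [hn, mem_singleton_iff] at hb1
  rw [hn', mem_singleton_iff] at hb2
  have hnn' : n = n' := by rw [← hb1, ← hb2]
  have hall : ∀ z, z ∈ (R.φ (classElem R.hX hm2)).1.2 → z = n' := by
    intro z hz
    rw [hn', mem_singleton_iff] at hz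
    exact hz
  have hr : rho2 R m = n' := by
    rw [rho2]
    rw [dif_pos hm2]
    exact hall _ (strB_ne R.hY (R.φ (classElem R.hX hm2))).some_mem
  rw [hn, hr, hnn']

lemma rho2_mem (R : Recon X Y) {m : X} (hm : m ∈ level X 2) : rho2 R m ∈ level Y 2 := by
  have h := rho2_spec R (q := classElem R.hX hm) rfl
  exact strB_lvl2 _ (h ▸ mem_singleton _)

lemma rho2_inv (R : Recon X Y) {m : X} (hm : m ∈ level X 2) :
    rho2 R.symm (rho2 R m) = m := by
  have hB : (R.φ (classElem R.hX hm)).1.2 = {rho2 R m} := rho2_spec R rfl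
  have h2 := rho2_spec R.symm (q := R.φ (classElem R.hX hm)) hB
  have : (R.symm.φ (R.φ (classElem R.hX hm))) = classElem R.hX hm := R.hpsiphi _
  rw [this] at h2
  have : ({m} : Set X) = {rho2 R.symm (rho2 R m)} := h2
  exact (singleton_eq_singleton_iff.mp this).symm

lemma B_image (R : Recon X Y) (q : Str X) : (R.φ q).1.2 = rho2 R '' q.1.2 := by
  ext n
  constructor
  · intro hn
    obtain ⟨r', hr'B, -, -, hlt⟩ := exists_up R.hY (R.φ q) hn ∅ finite_empty
    have hlt' : strLT q (R.ψ r') := (lt_transfer_psi R q r').mp hlt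
    obtain ⟨m, hm⟩ := (singD_iff R.hX (R.ψ r')).mp
      (acab_transfer R.symm ((singD_iff R.hY r').mpr ⟨n, hr'B⟩))
    have hmB : m ∈ q.1.2 := by
      have := (strLE_sub hlt'.1).2
      exact this (hm ▸ mem_singleton _)
    have : (R.φ (R.ψ r')).1.2 = {rho2 R m} := rho2_spec R hm
    rw [R.hphipsi, hr'B] at this
    exact ⟨m, hmB, (singleton_eq_singleton_iff.mp this).symm⟩
  · rintro ⟨m, hm, rfl⟩
    obtain ⟨r, hrB, -, -, hlt⟩ := exists_up R.hX q hm ∅ finite_empty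
    have : (R.φ r).1.2 = {rho2 R m} := rho2_spec R hrB
    have hsub := (strLE_sub ((R.hle q r).mp hlt.1)).2
    exact hsub (this ▸ mem_singleton _)

/-- the canonical class member with the same first coordinate -/
def mkC {A : Set X} {m : X} (h : StrMem X A {m}) : Str X := ⟨(A, {m}), h⟩

lemma star {q s : Str X} {m : X} (hm : m ∈ q.1.2) (h : StrMem X q.1.1 {m})
    (hs : s.1.2 = {m}) : strLT q s ↔ strLT (mkC h) s := by
  rw [strLT_iff_dom, strLT_iff_dom]
  constructor <;> rintro ⟨W, h1, h2, h3, h4, h5, h6⟩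
  · exact ⟨W, h1, by rw [hs]; exact subset_rfl, h3, h4, h5, h6⟩
  · exact ⟨W, h1, by rw [hs]; exact singleton_subset_iff.mpr hm, h3, h4, h5, h6⟩

lemma A_recover (hX : IsJPoset X) (q : Str X) {m : X} (hm : m ∈ q.1.2) {y : X} :
    y ∈ q.1.1 ↔ ∀ r : Str X, r.1.2 = {m} → strLT q r → y ∈ r.1.1 := by
  constructor
  · intro hy r _ hlt
    exact (strLE_sub hlt.1).1 hy
  · intro H
    by_contra hy
    obtain ⟨r, hrB, -, havoid, hlt⟩ := exists_up hX q hm {y} (finite_singleton y)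
    exact havoid y (H r hrB hlt) hy rfl

lemma psi_classB (R : Recon X Y) {m : X} (hm2 : m ∈ level X 2) {r' : Str Y}
    (hr2 : r'.1.2 = {rho2 R m}) : (R.ψ r').1.2 = {m} := by
  have h2 := rho2_spec R.symm (q := r') hr2
  rw [rho2_inv R hm2] at h2
  exact h2

lemma A_classmate (R : Recon X Y) (q : Str X) {m : X} (hm : m ∈ q.1.2)
    (h : StrMem X q.1.1 {m}) : (R.φ q).1.1 = (R.φ (mkC h)).1.1 := by
  have hm2 : m ∈ level X 2 := strB_lvl2 q hm
  have hm' : rho2 R m ∈ (R.φ q).1.2 := by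
    rw [B_image]; exact ⟨m, hm, rfl⟩
  have hmc : m ∈ (mkC h).1.2 := mem_singleton _
  have hm'' : rho2 R m ∈ (R.φ (mkC h)).1.2 := by
    rw [rho2_spec R (q := mkC h) rfl]; exact mem_singleton _
  have key : ∀ r' : Str Y, r'.1.2 = {rho2 R m} →
      (strLT (R.φ q) r' ↔ strLT (R.φ (mkC h)) r') := by
    intro r' hr2
    rw [lt_transfer_psi R q r', lt_transfer_psi R (mkC h) r']
    exact star hm h (psi_classB R hm2 hr2)
  ext y
  rw [A_recover R.hY (R.φ q) hm', A_recover R.hY (R.φ (mkC h)) hm'']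
  constructor <;> intro H r' hr2 hlt
  · exact H r' hr2 ((key r' hr2).mpr hlt)
  · exact H r' hr2 ((key r' hr2).mp hlt)

lemma A_mono (R : Recon X Y) {A₁ A₂ : Set X} {m : X} (h₁ : StrMem X A₁ {m})
    (h₂ : StrMem X A₂ {m}) (hsub : A₁ ⊆ A₂) :
    (R.φ (mkC h₁)).1.1 ⊆ (R.φ (mkC h₂)).1.1 := by
  intro y hy
  have hm2 : m ∈ level X 2 := h₂.2.1 (mem_singleton _)
  have hm' : rho2 R m ∈ (R.φ (mkC h₂)).1.2 := by
    rw [rho2_spec R (q := mkC h₂) rfl]; exact mem_singleton _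
  obtain ⟨r', hr'B, -, havoid, hlt⟩ :=
    exists_up R.hY (R.φ (mkC h₂)) hm' {y} (finite_singleton y)
  have hlt₂ : strLT (mkC h₂) (R.ψ r') := (lt_transfer_psi R _ r').mp hlt
  have hψB : (R.ψ r').1.2 = {m} := psi_classB R hm2 hr'B
  have hlt₁ : strLT (mkC h₁) (R.ψ r') := by
    rw [strLT_iff_dom] at hlt₂ ⊢
    obtain ⟨W, hW1, hW2, hW3, hW4, hW5, hW6⟩ := hlt₂
    exact ⟨W, ssubset_of_subset_of_ssubset hsub hW1, hW2, hW3, hW4, hW5,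
      fun a ha => hW6 a (hsub ha)⟩
  have hlt₁' : strLT (R.φ (mkC h₁)) r' := (lt_transfer_psi R _ r').mpr hlt₁
  have hyr : y ∈ r'.1.1 := (strLE_sub hlt₁'.1).1 hy
  by_contra hy2
  exact havoid y hyr hy2 rfl

lemma img_card_ge (R : Recon X Y) :
    ∀ (n : ℕ) {A : Set X} {m : X} (h : StrMem X A {m}), A.ncard = n →
      n ≤ ((R.φ (mkC h)).1.1).ncard := by
  intro n
  induction n with
  | zero => exact fun h _ => Nat.zero_le _
  | succ n ih =>
    intro A m h hcard
    have hApos : 1 ≤ ((R.φ (mkC h)).1.1).ncard :=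
      (Set.ncard_pos (strA_fin (R.φ (mkC h)))).mpr (strA_ne _)
    rcases Nat.eq_zero_or_pos n with hn | hn
    · omega
    · obtain ⟨a₀, ha₀, hwit⟩ := h.2.2.2
      have ha₀m : a₀ < m := hwit m (mem_singleton _)
      have hAfin : A.Finite := strA_fin (mkC h)
      obtain ⟨u, huA, hune⟩ := Set.exists_ne_of_one_lt_ncard (s := A) (by omega) a₀
      have h' : StrMem X (A \ {u}) {m} := by
        refine mkMem ((diff_subset).trans h.1) h.2.1 hAfin.diff
          (finite_singleton _) (singleton_nonempty _)
          ⟨a₀, ⟨ha₀, by simp [Ne.symm hune]⟩, fun b hb => hb ▸ ha₀m⟩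
      have hc' : (A \ {u}).ncard = n := by
        rw [Set.ncard_diff_singleton_of_mem huA, hcard]
        omega
      have hsub : (R.φ (mkC h')).1.1 ⊆ (R.φ (mkC h)).1.1 :=
        A_mono R h' h diff_subset
      have hne : (R.φ (mkC h')).1.1 ≠ (R.φ (mkC h)).1.1 := by
        intro heq
        have hBeq : (R.φ (mkC h')).1.2 = (R.φ (mkC h)).1.2 := by
          rw [rho2_spec R (q := mkC h') rfl, rho2_spec R (q := mkC h) rfl]
        have := R.inj (str_eq heq hBeq)
        have hAA : A \ {u} = A := congrArg (fun p : Str X => p.1.1) this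
        have : u ∈ A \ {u} := hAA.symm ▸ huA
        simp at this
      have hlt := Set.ncard_lt_ncard (HasSubset.Subset.ssubset_of_ne hsub hne)
        (strA_fin (R.φ (mkC h)))
      have := ih h' hc'
      omega

lemma img_card (R : Recon X Y) {A : Set X} {m : X} (h : StrMem X A {m}) :
    ((R.φ (mkC h)).1.1).ncard = A.ncard := by
  refine le_antisymm ?_ (img_card_ge R A.ncard h rfl)
  have hB : (R.φ (mkC h)).1.2 = {rho2 R m} := rho2_spec R (q := mkC h) rfl
  have h' : StrMem Y (R.φ (mkC h)).1.1 {rho2 R m} := by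
    have h2 := (R.φ (mkC h)).2
    rwa [hB] at h2
  have key : mkC h' = R.φ (mkC h) := str_eq rfl hB.symm
  have := img_card_ge R.symm ((R.φ (mkC h)).1.1).ncard h' rfl
  rwa [key, show R.symm.φ = R.ψ from rfl, R.hpsiphi] at this


/-! ## the map on level 1 -/

noncomputable def singElem (hX : IsJPoset X) {a : X} (h : a ∈ level X 1) : Str X :=
  ⟨({a}, {(exists_above hX h).choose}),
    mkMem (singleton_subset_iff.mpr h)
      (singleton_subset_iff.mpr (exists_above hX h).choose_spec.1)
      (finite_singleton _) (finite_singleton _) (singleton_nonempty _)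
      ⟨a, mem_singleton _, fun b hb => by
        rw [mem_singleton_iff] at hb
        rw [hb]
        exact (exists_above hX h).choose_spec.2⟩⟩

open Classical in
noncomputable def rho1 (R : Recon X Y) (a : X) : Y :=
  if h : a ∈ level X 1 then (strA_ne (R.φ (singElem R.hX h))).some
  else R.hY.uniqueMin.exists.choose

lemma sing_lt {a m : X} (h : StrMem X {a} {m}) : a < m := by
  obtain ⟨a', ha', hw⟩ := h.2.2.2
  rw [mem_singleton_iff] at ha'
  subst ha'
  exact hw m (mem_singleton _)

lemma rho1_spec (R : Recon X Y) {a m : X} (h : StrMem X {a} {m}) :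
    (R.φ (mkC h)).1.1 = {rho1 R a} := by
  have ha1 : a ∈ level X 1 := h.1 (mem_singleton _)
  have ham : a < m := sing_lt h
  have hm2 : m ∈ level X 2 := h.2.1 (mem_singleton _)
  obtain ⟨hm₀2, ham₀⟩ := (exists_above R.hX ha1).choose_spec
  set m₀ := (exists_above R.hX ha1).choose with hm₀def
  -- the bridge element
  have hv : StrMem X {a} {m, m₀} := by
    refine mkMem (singleton_subset_iff.mpr ha1) ?_ (finite_singleton _)
      ((finite_singleton _).insert m) ⟨m, mem_insert _ _⟩
      ⟨a, mem_singleton _, ?_⟩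
    · intro z hz
      rcases hz with hz | hz
      · exact hz ▸ hm2
      · rw [mem_singleton_iff] at hz
        exact hz ▸ hm₀2
    · intro b hb
      rcases hb with hb | hb
      · exact hb ▸ ham
      · rw [mem_singleton_iff] at hb
        exact hb ▸ ham₀
  set v : Str X := ⟨({a}, {m, m₀}), hv⟩ with hvdef
  have h₀ : StrMem X {a} {m₀} := (singElem R.hX ha1).2
  have e1 : (R.φ v).1.1 = (R.φ (mkC h)).1.1 :=
    A_classmate R v (mem_insert _ _) h
  have e2 : (R.φ v).1.1 = (R.φ (mkC h₀)).1.1 :=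
    A_classmate R v (mem_insert_of_mem _ (mem_singleton _)) h₀
  have hse : mkC h₀ = singElem R.hX ha1 := rfl
  have hcard : ((R.φ (mkC h₀)).1.1).ncard = 1 := by
    rw [img_card R h₀]
    exact Set.ncard_singleton a
  obtain ⟨y, hy⟩ := Set.ncard_eq_one.mp hcard
  have hrho : rho1 R a = y := by
    rw [rho1]
    rw [dif_pos ha1]
    have hall : ∀ z, z ∈ (R.φ (singElem R.hX ha1)).1.1 → z = y := by
      intro z hz
      rw [← hse, hy, mem_singleton_iff] at hz
      exact hz
    exact hall _ (strA_ne (R.φ (singElem R.hX ha1))).some_mem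
  rw [← e1, e2, hy, hrho]

lemma rho1_mem (R : Recon X Y) {a : X} (ha : a ∈ level X 1) : rho1 R a ∈ level Y 1 := by
  have h := (singElem R.hX ha).2
  have := rho1_spec R (h := h)
  exact strA_lvl1 (R.φ (mkC h)) (this ▸ mem_singleton _)

lemma rho1_inv (R : Recon X Y) {a : X} (ha : a ∈ level X 1) :
    rho1 R.symm (rho1 R a) = a := by
  have h := (singElem R.hX ha).2
  have hA : (R.φ (mkC h)).1.1 = {rho1 R a} := rho1_spec R h
  have hB : (R.φ (mkC h)).1.2 = {rho2 R (exists_above R.hX ha).choose} :=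
    rho2_spec R (q := mkC h) rfl
  have h' : StrMem Y {rho1 R a} {rho2 R (exists_above R.hX ha).choose} := by
    have h2 := (R.φ (mkC h)).2
    rwa [hA, hB] at h2
  have key : mkC h' = R.φ (mkC h) := str_eq hA.symm hB.symm
  have := rho1_spec R.symm h'
  rw [key, show R.symm.φ = R.ψ from rfl, R.hpsiphi] at this
  have : ({a} : Set X) = {rho1 R.symm (rho1 R a)} := this
  exact (singleton_eq_singleton_iff.mp this).symm

lemma lt_map (R : Recon X Y) {a m : X} (ha : a ∈ level X 1) (hm : m ∈ level X 2)
    (hlt : a < m) : rho1 R a < rho2 R m := by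
  have hmem : StrMem X {a} {m} :=
    mkMem (singleton_subset_iff.mpr ha) (singleton_subset_iff.mpr hm)
      (finite_singleton _) (finite_singleton _) (singleton_nonempty _)
      ⟨a, mem_singleton _, fun b hb => by
        rw [mem_singleton_iff] at hb; exact hb ▸ hlt⟩
  have hA : (R.φ (mkC hmem)).1.1 = {rho1 R a} := rho1_spec R hmem
  have hB : (R.φ (mkC hmem)).1.2 = {rho2 R m} := rho2_spec R (q := mkC hmem) rfl
  have h' := (R.φ (mkC hmem)).2
  rw [hA, hB] at h'
  exact sing_lt h'

lemma lt_iff (R : Recon X Y) {a m : X} (ha : a ∈ level X 1) (hm : m ∈ level X 2) :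
    a < m ↔ rho1 R a < rho2 R m := by
  refine ⟨lt_map R ha hm, fun hlt => ?_⟩
  have := lt_map R.symm (rho1_mem R ha) (rho2_mem R hm) hlt
  rwa [rho1_inv R ha, rho2_inv R hm] at this



/-! ## helpers for building members -/

lemma all_singleton {c m : X} (h : c < m) : ∀ b ∈ ({m} : Set X), c < b := by
  intro b hb
  rw [mem_singleton_iff] at hb
  exact hb ▸ h

lemma pair_subset {z₁ z₂ : X} {S : Set X} (h1 : z₁ ∈ S) (h2 : z₂ ∈ S) :
    ({z₁, z₂} : Set X) ⊆ S := by
  intro z hz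
  rcases hz with hz | hz
  · exact hz ▸ h1
  · rw [mem_singleton_iff] at hz
    exact hz ▸ h2

lemma triple_subset {z₁ z₂ z₃ : X} {S : Set X} (h1 : z₁ ∈ S) (h2 : z₂ ∈ S) (h3 : z₃ ∈ S) :
    ({z₁, z₂, z₃} : Set X) ⊆ S := by
  intro z hz
  rcases hz with hz | hz
  · exact hz ▸ h1
  · exact pair_subset h2 h3 hz

lemma mkMemS {A : Set X} {m : X} (h1 : A ⊆ level X 1) (hf : A.Finite) (hm : m ∈ level X 2)
    {a : X} (ha : a ∈ A) (ham : a < m) : StrMem X A {m} :=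
  mkMem h1 (singleton_subset_iff.mpr hm) hf (finite_singleton _) (singleton_nonempty _)
    ⟨a, ha, all_singleton ham⟩

/-! ## pairs and the general first coordinate -/

lemma rho1_inj (R : Recon X Y) {x x' : X} (hx : x ∈ level X 1) (hx' : x' ∈ level X 1)
    (h : rho1 R x = rho1 R x') : x = x' := by
  rw [← rho1_inv R hx, ← rho1_inv R hx', h]

lemma mkC_inj (R : Recon X Y) {A A' : Set X} {m : X} (h : StrMem X A {m})
    (h' : StrMem X A' {m}) (heq : (R.φ (mkC h)).1.1 = (R.φ (mkC h')).1.1) : A = A' := by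
  have hB : (R.φ (mkC h)).1.2 = (R.φ (mkC h')).1.2 := by
    rw [rho2_spec R (q := mkC h) rfl, rho2_spec R (q := mkC h') rfl]
  have := R.inj (str_eq heq hB)
  exact congrArg (fun p : Str X => p.1.1) this

lemma img_singleton_sub (R : Recon X Y) {a : X} {A : Set X} {m : X} (h : StrMem X A {m})
    (ha : a ∈ A) (ham : a < m) : rho1 R a ∈ (R.φ (mkC h)).1.1 := by
  have hA : StrMem X {a} {m} :=
    mkMemS (singleton_subset_iff.mpr (h.1 ha)) (finite_singleton _) (h.2.1 (mem_singleton _))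
      (mem_singleton _) ham
  have hsub := A_mono R hA h (singleton_subset_iff.mpr ha)
  rw [rho1_spec R hA] at hsub
  exact hsub (mem_singleton _)

lemma img_pair_good (R : Recon X Y) {a u m : X} (h : StrMem X {a, u} {m}) (hau : a ≠ u)
    (ham : a < m) (hum : u < m) : (R.φ (mkC h)).1.1 = {rho1 R a, rho1 R u} := by
  have ha1 : a ∈ level X 1 := h.1 (mem_insert _ _)
  have hu1 : u ∈ level X 1 := h.1 (mem_insert_of_mem _ (mem_singleton _))
  have hsub : ({rho1 R a, rho1 R u} : Set Y) ⊆ (R.φ (mkC h)).1.1 :=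
    pair_subset (img_singleton_sub R h (mem_insert _ _) ham)
      (img_singleton_sub R h (mem_insert_of_mem _ (mem_singleton _)) hum)
  have hne : rho1 R a ≠ rho1 R u := fun hh => hau (rho1_inj R ha1 hu1 hh)
  refine (Set.eq_of_subset_of_ncard_le hsub ?_ (strA_fin _)).symm
  rw [img_card R h, Set.ncard_pair hau, Set.ncard_pair hne]

lemma pair_repr (R : Recon X Y) {a u m : X} (h : StrMem X {a, u} {m}) (hau : a ≠ u)
    (ham : a < m) :
    ∃ y, (R.φ (mkC h)).1.1 = {rho1 R a, y} ∧ y ≠ rho1 R a := by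
  have hmem : rho1 R a ∈ (R.φ (mkC h)).1.1 :=
    img_singleton_sub R h (mem_insert _ _) ham
  have hcard : ((R.φ (mkC h)).1.1).ncard = 2 := by
    rw [img_card R h, Set.ncard_pair hau]
  have hdcard : ((R.φ (mkC h)).1.1 \ {rho1 R a}).ncard = 1 := by
    rw [Set.ncard_diff_singleton_of_mem hmem, hcard]
  obtain ⟨y, hy⟩ := Set.ncard_eq_one.mp hdcard
  have hyy : y ∈ (R.φ (mkC h)).1.1 \ {rho1 R a} := hy ▸ mem_singleton _
  refine ⟨y, ?_, by simpa using hyy.2⟩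
  ext z
  constructor
  · intro hz
    by_cases hza : z = rho1 R a
    · exact hza ▸ mem_insert _ _
    · have : z ∈ (R.φ (mkC h)).1.1 \ {rho1 R a} := ⟨hz, by simpa using hza⟩
      rw [hy, mem_singleton_iff] at this
      exact this ▸ mem_insert_of_mem _ (mem_singleton _)
  · intro hz
    rcases hz with hz | hz
    · exact hz ▸ hmem
    · rw [mem_singleton_iff] at hz
      exact hz ▸ hyy.1

lemma pair_indep (R : Recon X Y) {a b u m : X} (hab : a ≠ b) (hua : u ≠ a) (hub : u ≠ b)
    (ham : a < m) (hbm : b < m)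
    (hAU : StrMem X {a, u} {m}) (hBU : StrMem X {b, u} {m}) {y y' : Y}
    (hya : (R.φ (mkC hAU)).1.1 = {rho1 R a, y})
    (hy'b : (R.φ (mkC hBU)).1.1 = {rho1 R b, y'})
    (hyne : y ≠ rho1 R a) (hy'ne : y' ≠ rho1 R b) : y = y' := by
  have ha1 : a ∈ level X 1 := hAU.1 (mem_insert _ _)
  have hu1 : u ∈ level X 1 := hAU.1 (mem_insert_of_mem _ (mem_singleton _))
  have hb1 : b ∈ level X 1 := hBU.1 (mem_insert _ _)
  have hm2 : m ∈ level X 2 := hAU.2.1 (mem_singleton _)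
  have hrab : rho1 R a ≠ rho1 R b := fun hh => hab (rho1_inj R ha1 hb1 hh)
  have hAB : StrMem X {a, b} {m} :=
    mkMemS (pair_subset ha1 hb1) ((finite_singleton _).insert _) hm2 (mem_insert _ _) ham
  have hABU : StrMem X {a, b, u} {m} :=
    mkMemS (triple_subset ha1 hb1 hu1) (((finite_singleton _).insert _).insert _) hm2
      (mem_insert _ _) ham
  have himgab : (R.φ (mkC hAB)).1.1 = {rho1 R a, rho1 R b} := img_pair_good R hAB hab ham hbm
  have hyb : y ≠ rho1 R b := by
    intro hh
    have heq : (R.φ (mkC hAU)).1.1 = (R.φ (mkC hAB)).1.1 := by rw [hya, himgab, hh]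
    have heq2 := mkC_inj R hAU hAB heq
    have : u ∈ ({a, b} : Set X) := heq2 ▸ (mem_insert_of_mem _ (mem_singleton u))
    rcases this with hz | hz
    · exact hua hz
    · rw [mem_singleton_iff] at hz; exact hub hz
  have hy'a : y' ≠ rho1 R a := by
    intro hh
    have heq : (R.φ (mkC hBU)).1.1 = (R.φ (mkC hAB)).1.1 := by
      rw [hy'b, himgab, hh]
      exact Set.pair_comm _ _
    have heq2 := mkC_inj R hBU hAB heq
    have : u ∈ ({a, b} : Set X) := heq2 ▸ (mem_insert_of_mem _ (mem_singleton u))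
    rcases this with hz | hz
    · exact hua hz
    · rw [mem_singleton_iff] at hz; exact hub hz
  by_contra hne
  have hsubau : (R.φ (mkC hAU)).1.1 ⊆ (R.φ (mkC hABU)).1.1 :=
    A_mono R hAU hABU (pair_subset (mem_insert _ _)
      (mem_insert_of_mem _ (mem_insert_of_mem _ (mem_singleton _))))
  have hsubbu : (R.φ (mkC hBU)).1.1 ⊆ (R.φ (mkC hABU)).1.1 :=
    A_mono R hBU hABU (pair_subset (mem_insert_of_mem _ (mem_insert _ _))
      (mem_insert_of_mem _ (mem_insert_of_mem _ (mem_singleton _))))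
  have hsubab : (R.φ (mkC hAB)).1.1 ⊆ (R.φ (mkC hABU)).1.1 :=
    A_mono R hAB hABU (pair_subset (mem_insert _ _)
      (mem_insert_of_mem _ (mem_insert _ _)))
  have hS : ({rho1 R a, rho1 R b, y, y'} : Set Y) ⊆ (R.φ (mkC hABU)).1.1 := by
    intro z hz
    rcases hz with hz | hz | hz | hz
    · exact hz ▸ hsubab (himgab ▸ mem_insert _ _)
    · exact hz ▸ hsubab (himgab ▸ mem_insert_of_mem _ (mem_singleton _))
    · exact hz ▸ hsubau (hya ▸ mem_insert_of_mem _ (mem_singleton _))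
    · rw [mem_singleton_iff] at hz
      exact hz ▸ hsubbu (hy'b ▸ mem_insert_of_mem _ (mem_singleton _))
  have hScard : ({rho1 R a, rho1 R b, y, y'} : Set Y).ncard = 4 := by
    rw [Set.ncard_insert_of_notMem ?h1 (((finite_singleton _).insert _).insert _),
      Set.ncard_insert_of_notMem ?h2 ((finite_singleton _).insert _),
      Set.ncard_pair hne]
    case h1 =>
      simp only [mem_insert_iff, mem_singleton_iff]
      push_neg
      exact ⟨hrab, Ne.symm hyne, Ne.symm hy'a⟩
    case h2 =>
      simp only [mem_insert_iff, mem_singleton_iff]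
      push_neg
      exact ⟨Ne.symm hyb, Ne.symm hy'ne⟩
  have hABUcard : ((R.φ (mkC hABU)).1.1).ncard = 3 := by
    rw [img_card R hABU,
      Set.ncard_insert_of_notMem ?h3 ((finite_singleton _).insert _),
      Set.ncard_pair (Ne.symm hub)]
    case h3 =>
      simp only [mem_insert_iff, mem_singleton_iff]
      push_neg
      exact ⟨hab, Ne.symm hua⟩
  have := Set.ncard_le_ncard hS (strA_fin _)
  omega

lemma img_pair (R : Recon X Y) {a u m : X} (h : StrMem X {a, u} {m}) (hau : a ≠ u)
    (ham : a < m) : (R.φ (mkC h)).1.1 = {rho1 R a, rho1 R u} := by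
  have ha1 : a ∈ level X 1 := h.1 (mem_insert _ _)
  have hu1 : u ∈ level X 1 := h.1 (mem_insert_of_mem _ (mem_singleton _))
  have hm2 : m ∈ level X 2 := h.2.1 (mem_singleton _)
  by_cases hum : u < m
  · exact img_pair_good R h hau ham hum
  · obtain ⟨hμ2, huμ⟩ := (exists_above R.hX hu1).choose_spec
    set μ := (exists_above R.hX hu1).choose with hμdef
    obtain ⟨t, ht1, htm, htμ⟩ := exists_lb2 R.hX hm2 hμ2
    have htu : t ≠ u := fun hh => hum (hh ▸ htm)
    have hTU : StrMem X {t, u} {m} :=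
      mkMemS (pair_subset ht1 hu1) ((finite_singleton _).insert _) hm2 (mem_insert _ _) htm
    have hTUμ : StrMem X {t, u} {μ} :=
      mkMemS (pair_subset ht1 hu1) ((finite_singleton _).insert _) hμ2 (mem_insert _ _) htμ
    have hV : StrMem X {t, u} {m, μ} := by
      refine mkMem (pair_subset ht1 hu1) (pair_subset hm2 hμ2)
        ((finite_singleton _).insert _) ((finite_singleton _).insert _)
        ⟨m, mem_insert _ _⟩ ⟨t, mem_insert _ _, ?_⟩
      intro c hc
      rcases hc with hc | hc
      · exact hc ▸ htm
      · rw [mem_singleton_iff] at hc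
        exact hc ▸ htμ
    set v : Str X := ⟨({t, u}, {m, μ}), hV⟩ with hvdef
    have e1 : (R.φ v).1.1 = (R.φ (mkC hTU)).1.1 := A_classmate R v (mem_insert _ _) hTU
    have e2 : (R.φ v).1.1 = (R.φ (mkC hTUμ)).1.1 :=
      A_classmate R v (mem_insert_of_mem _ (mem_singleton _)) hTUμ
    have himgμ : (R.φ (mkC hTUμ)).1.1 = {rho1 R t, rho1 R u} :=
      img_pair_good R hTUμ htu htμ huμ
    have himgtu : (R.φ (mkC hTU)).1.1 = {rho1 R t, rho1 R u} := by
      rw [← e1, e2, himgμ]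
    by_cases hat : a = t
    · subst hat
      rw [show mkC h = mkC hTU from rfl, himgtu]
    · obtain ⟨y, hya, hyne⟩ := pair_repr R h hau ham
      obtain ⟨y', hy't, hy'ne⟩ := pair_repr R hTU htu htm
      have hy'u : y' = rho1 R u := by
        have h2 : ({rho1 R t, y'} : Set Y) = {rho1 R t, rho1 R u} := by
          rw [← hy't, himgtu]
        have hmem : y' ∈ ({rho1 R t, rho1 R u} : Set Y) :=
          h2 ▸ (mem_insert_of_mem _ (mem_singleton _))
        rcases hmem with hz | hz
        · exact absurd hz hy'ne
        · rwa [mem_singleton_iff] at hz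
      have hkey := pair_indep R hat (Ne.symm hau) (Ne.symm htu) ham htm h hTU hya hy't
        hyne hy'ne
      rw [hya, hkey, hy'u]

lemma img_eq (R : Recon X Y) {A : Set X} {m : X} (h : StrMem X A {m}) :
    (R.φ (mkC h)).1.1 = rho1 R '' A := by
  obtain ⟨a₀, ha₀, hwit⟩ := h.2.2.2
  have ha₀m : a₀ < m := hwit m (mem_singleton _)
  have hsub : rho1 R '' A ⊆ (R.φ (mkC h)).1.1 := by
    rintro _ ⟨u, hu, rfl⟩
    by_cases hua : u = a₀
    · subst hua
      exact img_singleton_sub R h hu ha₀m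
    · have hU : StrMem X {a₀, u} {m} :=
        mkMemS (pair_subset (h.1 ha₀) (h.1 hu)) ((finite_singleton _).insert _)
          (h.2.1 (mem_singleton _)) (mem_insert _ _) ha₀m
      have himg := img_pair R hU (fun hh => hua hh.symm) ha₀m
      have hsub2 : (R.φ (mkC hU)).1.1 ⊆ (R.φ (mkC h)).1.1 :=
        A_mono R hU h (pair_subset ha₀ hu)
      exact hsub2 (himg ▸ mem_insert_of_mem _ (mem_singleton _))
  refine (Set.eq_of_subset_of_ncard_le hsub ?_ (strA_fin _)).symm
  rw [img_card R h, Set.ncard_image_of_injOn]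
  intro x hx x' hx' hh
  exact rho1_inj R (h.1 hx) (h.1 hx') hh

lemma A_image (R : Recon X Y) (q : Str X) : (R.φ q).1.1 = rho1 R '' q.1.1 := by
  obtain ⟨m, hm⟩ := strB_ne R.hX q
  obtain ⟨a, ha, hwa⟩ := strWit q
  have h' : StrMem X q.1.1 {m} :=
    mkMemS (strA_lvl1 q) (strA_fin q) (strB_lvl2 q hm) ha (hwa m hm)
  rw [A_classmate R q hm h', img_eq R h']


/-! ## the global map -/

open Classical in
noncomputable def rhoF (R : Recon X Y) (x : X) : Y :=
  if x ∈ level X 1 then rho1 R x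
  else if x ∈ level X 2 then rho2 R x
  else R.hY.uniqueMin.exists.choose

lemma rhoF_eq1 (R : Recon X Y) {x : X} (hx : x ∈ level X 1) : rhoF R x = rho1 R x := by
  rw [rhoF]
  rw [if_pos hx]

lemma rhoF_eq2 (R : Recon X Y) {x : X} (hx : x ∈ level X 2) : rhoF R x = rho2 R x := by
  rw [rhoF]
  rw [if_neg (fun h1 => lvl1_ne_lvl2 h1 hx), if_pos hx]

lemma rhoF_eq0 (R : Recon X Y) {x : X} (h1 : x ∉ level X 1) (h2 : x ∉ level X 2) :
    rhoF R x = R.hY.uniqueMin.exists.choose := by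
  rw [rhoF]
  rw [if_neg h1, if_neg h2]

lemma rhoF_image1 (R : Recon X Y) {A : Set X} (hA : A ⊆ level X 1) :
    rhoF R '' A = rho1 R '' A := by
  apply image_congr
  intro x hx
  exact rhoF_eq1 R (hA hx)

lemma rhoF_image2 (R : Recon X Y) {B : Set X} (hB : B ⊆ level X 2) :
    rhoF R '' B = rho2 R '' B := by
  apply image_congr
  intro x hx
  exact rhoF_eq2 R (hB hx)

lemma isMin_mem_level0 {w : X} (h : IsMin w) : w ∈ level X 0 := by
  rw [mem_level]
  simpa using Order.height_eq_zero.mpr h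

lemma isMin_not_levels {w : X} (h : IsMin w) : w ∉ level X 1 ∧ w ∉ level X 2 := by
  constructor
  · intro h1
    have := level_eq_level (isMin_mem_level0 h) h1
    omega
  · intro h2
    have := level_eq_level (isMin_mem_level0 h) h2
    omega

lemma isMin_of_not_levels (hX : IsJPoset X) {x : X} (h1 : x ∉ level X 1)
    (h2 : x ∉ level X 2) : IsMin x := by
  rcases trichotomy hX x with h0 | h | h
  · exact Order.height_eq_zero.mp h0
  · exact absurd h h1
  · exact absurd h h2

lemma min_unique (hX : IsJPoset X) {w w' : X} (h : IsMin w) (h' : IsMin w') : w = w' := by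
  obtain ⟨r, -, hun⟩ := hX.uniqueMin
  rw [hun w h, hun w' h']

lemma rhoF_inv (R : Recon X Y) (x : X) : rhoF R.symm (rhoF R x) = x := by
  by_cases h1 : x ∈ level X 1
  · rw [rhoF_eq1 R h1, rhoF_eq1 R.symm (rho1_mem R h1)]
    exact rho1_inv R h1
  by_cases h2 : x ∈ level X 2
  · rw [rhoF_eq2 R h2, rhoF_eq2 R.symm (rho2_mem R h2)]
    exact rho2_inv R h2
  · have hx : IsMin x := isMin_of_not_levels R.hX h1 h2
    rw [rhoF_eq0 R h1 h2]
    have hw : IsMin (R.hY.uniqueMin.exists.choose) := R.hY.uniqueMin.exists.choose_spec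
    obtain ⟨hw1, hw2⟩ := isMin_not_levels hw
    rw [rhoF_eq0 R.symm hw1 hw2]
    exact min_unique R.hX (R.symm.hY.uniqueMin.exists.choose_spec) hx

lemma Recon.symm_symm (R : Recon X Y) : R.symm.symm = R := rfl

lemma rhoF_surj (R : Recon X Y) : Function.Surjective (rhoF R) := by
  intro y
  refine ⟨rhoF R.symm y, ?_⟩
  have := rhoF_inv R.symm y
  rwa [Recon.symm_symm] at this

lemma rho2_inj (R : Recon X Y) {x x' : X} (hx : x ∈ level X 2) (hx' : x' ∈ level X 2)
    (h : rho2 R x = rho2 R x') : x = x' := by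
  rw [← rho2_inv R hx, ← rho2_inv R hx', h]

lemma rhoF_le_iff (R : Recon X Y) (x x' : X) : x ≤ x' ↔ rhoF R x ≤ rhoF R x' := by
  have hminY : IsMin (R.hY.uniqueMin.exists.choose) := R.hY.uniqueMin.exists.choose_spec
  rcases trichotomy R.hX x with hx0 | hx1 | hx2
  · -- x is the minimum
    have hx : IsMin x := Order.height_eq_zero.mp hx0
    obtain ⟨h1, h2⟩ := isMin_not_levels hx
    rw [rhoF_eq0 R h1 h2]
    exact iff_of_true (min_le_all R.hX hx x') (min_le_all R.hY hminY _)
  · -- x ∈ level 1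
    rw [rhoF_eq1 R hx1]
    rcases trichotomy R.hX x' with hx0' | hx1' | hx2'
    · have hx' : IsMin x' := Order.height_eq_zero.mp hx0'
      obtain ⟨h1', h2'⟩ := isMin_not_levels hx'
      rw [rhoF_eq0 R h1' h2']
      refine iff_of_false (not_le_of_levels R.hX hx1 (isMin_mem_level0 hx') (by omega))
        (not_le_of_levels R.hY (rho1_mem R hx1) (isMin_mem_level0 hminY) (by omega))
    · rw [rhoF_eq1 R hx1']
      constructor
      · intro h
        rw [antichain1 R.hX hx1 hx1' h]
      · intro h
        rw [rho1_inj R hx1 hx1'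
          (antichain1 R.hY (rho1_mem R hx1) (rho1_mem R hx1') h)]
    · rw [rhoF_eq2 R hx2']
      constructor
      · intro h
        have hlt : x < x' := h.lt_of_ne (by
          intro hh
          exact lvl1_ne_lvl2 hx1 (hh ▸ hx2'))
        exact ((lt_iff R hx1 hx2').mp hlt).le
      · intro h
        have hlt : rho1 R x < rho2 R x' := h.lt_of_ne (by
          intro hh
          exact lvl1_ne_lvl2 (rho1_mem R hx1) (hh ▸ rho2_mem R hx2'))
        exact ((lt_iff R hx1 hx2').mpr hlt).le
  · -- x ∈ level 2
    rw [rhoF_eq2 R hx2]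
    rcases trichotomy R.hX x' with hx0' | hx1' | hx2'
    · have hx' : IsMin x' := Order.height_eq_zero.mp hx0'
      obtain ⟨h1', h2'⟩ := isMin_not_levels hx'
      rw [rhoF_eq0 R h1' h2']
      refine iff_of_false (not_le_of_levels R.hX hx2 (isMin_mem_level0 hx') (by omega))
        (not_le_of_levels R.hY (rho2_mem R hx2) (isMin_mem_level0 hminY) (by omega))
    · rw [rhoF_eq1 R hx1']
      exact iff_of_false (not_le_of_levels R.hX hx2 hx1' (by omega))
        (not_le_of_levels R.hY (rho2_mem R hx2) (rho1_mem R hx1') (by omega))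
    · rw [rhoF_eq2 R hx2']
      constructor
      · intro h
        rw [antichain2 R.hX hx2 h]
      · intro h
        rw [rho2_inj R hx2 hx2' (antichain2 R.hY (rho2_mem R hx2) h)]

lemma recon_components (R : Recon X Y) (p : Str X) :
    (R.φ p).1 = (rhoF R '' p.1.1, rhoF R '' p.1.2) := by
  refine Prod.ext ?_ ?_
  · rw [rhoF_image1 R (strA_lvl1 p)]
    exact A_image R p
  · rw [rhoF_image2 R (strB_lvl2 p)]
    exact B_image R p

/-! ## the forward direction -/

section Forward

variable (e : X ≃o Y)

lemma level_map (i : ℕ) (x : X) : e x ∈ level Y i ↔ x ∈ level X i := by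
  rw [mem_level, mem_level, Order.height_orderIso]

lemma image_symm_image (S : Set X) : e.symm '' (e '' S) = S := by
  ext z
  simp

lemma strMem_map {A B : Set X} (h : StrMem X A B) : StrMem Y (e '' A) (e '' B) := by
  obtain ⟨h1, h2, h3, a, ha, hw⟩ := h
  refine ⟨?_, ?_, ?_, e a, mem_image_of_mem e ha, ?_⟩
  · rintro _ ⟨x, hx, rfl⟩
    exact (level_map e 1 x).mpr (h1 hx)
  · rintro _ ⟨x, hx, rfl⟩
    exact (level_map e 2 x).mpr (h2 hx)
  · rcases h3 with ⟨f1, n1, f2, n2⟩ | ⟨x, hx1, hA, hB⟩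
    · exact Or.inl ⟨f1.image e, n1.image e, f2.image e, n2.image e⟩
    · refine Or.inr ⟨e x, (level_map e 1 x).mpr hx1, by rw [hA, image_singleton], ?_⟩
      rw [hB]
      ext z
      constructor
      · rintro ⟨w, ⟨hw2, hxw⟩, rfl⟩
        exact ⟨(level_map e 2 w).mpr hw2, e.strictMono hxw⟩
      · rintro ⟨hz2, hxz⟩
        refine ⟨e.symm z, ⟨?_, ?_⟩, by simp⟩
        · rw [← e.apply_symm_apply z] at hz2
          exact (level_map e 2 (e.symm z)).mp hz2
        · have : e x < e (e.symm z) := by rwa [e.apply_symm_apply]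
          exact e.lt_iff_lt.mp this
  · rintro _ ⟨b, hb, rfl⟩
    exact e.strictMono (hw b hb)

lemma strLE_map {A B C D : Set X} (h : StrLE X A B C D) :
    StrLE Y (e '' A) (e '' B) (e '' C) (e '' D) := by
  rcases h with ⟨hAC, hBD⟩ | ⟨W, h1, h2, h3, h4, h5, h6⟩
  · exact Or.inl ⟨by rw [hAC], by rw [hBD]⟩
  · refine Or.inr ⟨e '' W, ⟨image_mono h1.subset, ?_⟩, image_mono h2,
      image_mono h3, h4.image e, ?_, ?_⟩
    · intro hCA
      refine h1.2 ?_
      intro c hc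
      obtain ⟨a, ha, hae⟩ := hCA (mem_image_of_mem e hc)
      rwa [← e.injective hae]
    · rintro _ ⟨w, hw, rfl⟩ _ ⟨d, hd, rfl⟩
      exact e.strictMono (h5 w hw d hd)
    · rintro _ ⟨a, ha, rfl⟩ m' hlt hall
      have ham : a < e.symm m' := by
        have : e a < e (e.symm m') := by rwa [e.apply_symm_apply]
        exact e.lt_iff_lt.mp this
      have hWm : ∀ w ∈ W, w < e.symm m' := by
        intro w hw
        have := hall (e w) (mem_image_of_mem e hw)
        have : e w < e (e.symm m') := by rwa [e.apply_symm_apply]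
        exact e.lt_iff_lt.mp this
      exact ⟨e.symm m', h6 a ha (e.symm m') ham hWm, e.apply_symm_apply m'⟩

def phiOf : Str X → Str Y := fun p => ⟨(e '' p.1.1, e '' p.1.2), strMem_map e p.2⟩

lemma phiOf_le_iff (p q : Str X) : strLE p q ↔ strLE (phiOf e p) (phiOf e q) := by
  constructor
  · exact fun h => strLE_map e h
  · intro h
    have h2 := strLE_map e.symm h
    simp only [phiOf] at h2
    rwa [image_symm_image e p.1.1, image_symm_image e p.1.2, image_symm_image e q.1.1,
      image_symm_image e q.1.2] at h2

lemma image_image_symm (S : Set Y) : e '' (e.symm '' S) = S := by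
  ext z
  simp

lemma phiOf_surj : Function.Surjective (phiOf e) := by
  intro q
  refine ⟨phiOf e.symm q, ?_⟩
  apply str_eq
  · exact image_image_symm e q.1.1
  · exact image_image_symm e q.1.2

end Forward



theorem stmt_17' {X Y : Type*} [PartialOrder X] [PartialOrder Y]
    (hX : IsJPoset X) (hY : IsJPoset Y) :
    ((∃ ρ : X → Y, Function.Surjective ρ ∧ ∀ x x' : X, x ≤ x' ↔ ρ x ≤ ρ x') ↔
      (∃ φ : Str X → Str Y, Function.Surjective φ ∧
        ∀ p q : Str X, strLE p q ↔ strLE (φ p) (φ q))) ∧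
    (∀ ρ : X → Y, Function.Surjective ρ → (∀ x x' : X, x ≤ x' ↔ ρ x ≤ ρ x') →
      ∃ φ : Str X → Str Y, Function.Surjective φ ∧
        (∀ p q : Str X, strLE p q ↔ strLE (φ p) (φ q)) ∧
        (∀ p : Str X, (φ p).1 = (ρ '' p.1.1, ρ '' p.1.2))) ∧
    (∀ φ : Str X → Str Y, Function.Surjective φ →
      (∀ p q : Str X, strLE p q ↔ strLE (φ p) (φ q)) →
      ∃ ρ : X → Y, Function.Surjective ρ ∧ (∀ x x' : X, x ≤ x' ↔ ρ x ≤ ρ x') ∧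
        (∀ p : Str X, (φ p).1 = (ρ '' p.1.1, ρ '' p.1.2))) := by
  have part2 : ∀ ρ : X → Y, Function.Surjective ρ → (∀ x x' : X, x ≤ x' ↔ ρ x ≤ ρ x') →
      ∃ φ : Str X → Str Y, Function.Surjective φ ∧
        (∀ p q : Str X, strLE p q ↔ strLE (φ p) (φ q)) ∧
        (∀ p : Str X, (φ p).1 = (ρ '' p.1.1, ρ '' p.1.2)) := by
    intro ρ hsurj hiff
    have hinj : Function.Injective ρ := fun x x' h =>
      le_antisymm ((hiff x x').mpr h.le) ((hiff x' x).mpr h.ge)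
    let e : X ≃o Y :=
      { toEquiv := Equiv.ofBijective ρ ⟨hinj, hsurj⟩
        map_rel_iff' := @fun a b => (hiff a b).symm }
    refine ⟨JP.phiOf e, JP.phiOf_surj e, fun p q => JP.phiOf_le_iff e p q, fun p => ?_⟩
    show (e '' p.1.1, e '' p.1.2) = (ρ '' p.1.1, ρ '' p.1.2)
    have hcoe : ⇑e = ρ := rfl
    rw [hcoe]
  have part3 : ∀ φ : Str X → Str Y, Function.Surjective φ →
      (∀ p q : Str X, strLE p q ↔ strLE (φ p) (φ q)) →
      ∃ ρ : X → Y, Function.Surjective ρ ∧ (∀ x x' : X, x ≤ x' ↔ ρ x ≤ ρ x') ∧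
        (∀ p : Str X, (φ p).1 = (ρ '' p.1.1, ρ '' p.1.2)) := by
    intro φ hs hl
    have hinjφ : Function.Injective φ := by
      intro p q h
      have e1 : strLE (φ p) (φ q) := by rw [h]; exact JP.strLE_refl _
      have e2 : strLE (φ q) (φ p) := by rw [h]; exact JP.strLE_refl _
      exact JP.strLE_antisymm ((hl p q).mpr e1) ((hl q p).mpr e2)
    let ψ : Str Y → Str X := fun q => (hs q).choose
    have hψφ : ∀ q, φ (ψ q) = q := fun q => (hs q).choose_spec
    have hφψ : ∀ p, ψ (φ p) = p := fun p => hinjφ (hψφ (φ p))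
    let R : JP.Recon X Y := ⟨hX, hY, φ, ψ, hφψ, hψφ, hl⟩
    exact ⟨JP.rhoF R, JP.rhoF_surj R, JP.rhoF_le_iff R, fun p => JP.recon_components R p⟩
  refine ⟨⟨?_, ?_⟩, part2, part3⟩
  · rintro ⟨ρ, h1, h2⟩
    obtain ⟨φ, a, b, -⟩ := part2 ρ h1 h2
    exact ⟨φ, a, b⟩
  · rintro ⟨φ, h1, h2⟩
    obtain ⟨ρ, a, b, -⟩ := part3 φ h1 h2
    exact ⟨ρ, a, b⟩


end JP

/-- Main Theorem: `X ≅ Y` iff `Str X ≅ Str Y`; an isomorphism `ρ : X → Y`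
induces the isomorphism `(A,B) ↦ (ρ(A), ρ(B))` of `Str X` onto `Str Y`, and every
isomorphism `φ : Str X → Str Y` is of this form for some isomorphism `ρ : X → Y`. -/
theorem stmt_17 {X Y : Type*} [PartialOrder X] [PartialOrder Y]
    (hX : IsJPoset X) (hY : IsJPoset Y) :
    ((∃ ρ : X → Y, Function.Surjective ρ ∧ ∀ x x' : X, x ≤ x' ↔ ρ x ≤ ρ x') ↔
      (∃ φ : Str X → Str Y, Function.Surjective φ ∧
        ∀ p q : Str X, strLE p q ↔ strLE (φ p) (φ q))) ∧
    (∀ ρ : X → Y, Function.Surjective ρ → (∀ x x' : X, x ≤ x' ↔ ρ x ≤ ρ x') →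
      ∃ φ : Str X → Str Y, Function.Surjective φ ∧
        (∀ p q : Str X, strLE p q ↔ strLE (φ p) (φ q)) ∧
        (∀ p : Str X, (φ p).1 = (ρ '' p.1.1, ρ '' p.1.2))) ∧
    (∀ φ : Str X → Str Y, Function.Surjective φ →
      (∀ p q : Str X, strLE p q ↔ strLE (φ p) (φ q)) →
      ∃ ρ : X → Y, Function.Surjective ρ ∧ (∀ x x' : X, x ≤ x' ↔ ρ x ≤ ρ x') ∧
        (∀ p : Str X, (φ p).1 = (ρ '' p.1.1, ρ '' p.1.2))) := by
  have part2 : ∀ ρ : X → Y, Function.Surjective ρ → (∀ x x' : X, x ≤ x' ↔ ρ x ≤ ρ x') →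
      ∃ φ : Str X → Str Y, Function.Surjective φ ∧
        (∀ p q : Str X, strLE p q ↔ strLE (φ p) (φ q)) ∧
        (∀ p : Str X, (φ p).1 = (ρ '' p.1.1, ρ '' p.1.2)) := by
    intro ρ hsurj hiff
    have hinj : Function.Injective ρ := fun x x' h =>
      le_antisymm ((hiff x x').mpr h.le) ((hiff x' x).mpr h.ge)
    let e : X ≃o Y :=
      { toEquiv := Equiv.ofBijective ρ ⟨hinj, hsurj⟩
        map_rel_iff' := @fun a b => (hiff a b).symm }
    refine ⟨JP.phiOf e, JP.phiOf_surj e, fun p q => JP.phiOf_le_iff e p q, fun p => ?_⟩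
    show (e '' p.1.1, e '' p.1.2) = (ρ '' p.1.1, ρ '' p.1.2)
    have hcoe : ⇑e = ρ := rfl
    rw [hcoe]
  have part3 : ∀ φ : Str X → Str Y, Function.Surjective φ →
      (∀ p q : Str X, strLE p q ↔ strLE (φ p) (φ q)) →
      ∃ ρ : X → Y, Function.Surjective ρ ∧ (∀ x x' : X, x ≤ x' ↔ ρ x ≤ ρ x') ∧
        (∀ p : Str X, (φ p).1 = (ρ '' p.1.1, ρ '' p.1.2)) := by
    intro φ hs hl
    have hinjφ : Function.Injective φ := by
      intro p q h
      have e1 : strLE (φ p) (φ q) := by rw [h]; exact JP.strLE_refl _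
      have e2 : strLE (φ q) (φ p) := by rw [h]; exact JP.strLE_refl _
      exact JP.strLE_antisymm ((hl p q).mpr e1) ((hl q p).mpr e2)
    let ψ : Str Y → Str X := fun q => (hs q).choose
    have hψφ : ∀ q, φ (ψ q) = q := fun q => (hs q).choose_spec
    have hφψ : ∀ p, ψ (φ p) = p := fun p => hinjφ (hψφ (φ p))
    let R : JP.Recon X Y := ⟨hX, hY, φ, ψ, hφψ, hψφ, hl⟩
    exact ⟨JP.rhoF R, JP.rhoF_surj R, JP.rhoF_le_iff R, fun p => JP.recon_components R p⟩
  refine ⟨⟨?_, ?_⟩, part2, part3⟩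
  · rintro ⟨ρ, h1, h2⟩
    obtain ⟨φ, a, b, -⟩ := part2 ρ h1 h2
    exact ⟨φ, a, b⟩
  · rintro ⟨φ, h1, h2⟩
    obtain ⟨ρ, a, b, -⟩ := part3 φ h1 h2
    exact ⟨ρ, a, b⟩
end
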